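/- arXiv:1409.5853 — 6 statements merged into one kernel-verified Lean document; each statement's English description precedes it below -/
import Mathlib

section
/- Let G and G₁ be finite simple graphs on n vertices with adjacency matrices A and A₁. If there exists a matrix P ∈ GL(n,ℤ) ∩ O(n,ℝ) with PᵀAP = A₁, then G and G₁ are isomorphic graphs. -/
open Matrix

private lemma squares_sum_one {n : ℕ} (x : Fin n → ℤ) (h : ∑ i, x i ^ 2 = 1) :
    ∃! i, x i ≠ 0 := by
  have hex : ∃ i, x i ≠ 0 := by
    by_contra hc
    push_neg at hc
    simp [hc] at h
  obtain ⟨i, hi⟩ := hex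
  refine ⟨i, hi, ?_⟩
  intro j hj
  by_contra hne
  have hone : ∀ k : Fin n, x k ≠ 0 → 1 ≤ x k ^ 2 := by
    intro k hk
    rcases hk.lt_or_gt with h'|h' <;> nlinarith
  have hsub : ∑ k ∈ ({j, i} : Finset (Fin n)), x k ^ 2 ≤ ∑ k, x k ^ 2 :=
    Finset.sum_le_sum_of_subset_of_nonneg (Finset.subset_univ _)
      (fun k _ _ => sq_nonneg _)
  rw [Finset.sum_pair hne, h] at hsub
  have := hone j hj
  have := hone i hi
  omega

/-- If the adjacency matrices of two graphs are related by congruence by a matrix that is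
both in `GL(n,ℤ)` and orthogonal over `ℝ`, then the graphs are isomorphic (i.e. their
adjacency matrices are related by a permutation matrix). -/
theorem stmt_1 (n : ℕ) (G G₁ : SimpleGraph (Fin n))
    [DecidableRel G.Adj] [DecidableRel G₁.Adj]
    (P : Matrix (Fin n) (Fin n) ℤ)
    (hGL : IsUnit P.det)
    (hO : (P.map fun x : ℤ => (x : ℝ))ᵀ * (P.map fun x : ℤ => (x : ℝ)) = 1)
    (hcong : Pᵀ * G.adjMatrix ℤ * P = G₁.adjMatrix ℤ) :
    ∃ σ : Equiv.Perm (Fin n),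
      (σ.permMatrix ℤ)ᵀ * G.adjMatrix ℤ * σ.permMatrix ℤ = G₁.adjMatrix ℤ := by
  classical
  -- Step 1: PᵀP = 1 over ℤ
  have hmapinj : Function.Injective (fun M : Matrix (Fin n) (Fin n) ℤ =>
      M.map fun x : ℤ => (x : ℝ)) := fun M N h => by
    ext i j
    have := congrFun (congrFun h i) j
    simpa using this
  have hPtP : Pᵀ * P = 1 := by
    apply hmapinj
    show (Pᵀ * P).map (fun x : ℤ => (x : ℝ)) = (1 : Matrix (Fin n) (Fin n) ℤ).map (fun x : ℤ => (x : ℝ))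
    have : (Pᵀ * P).map (fun x : ℤ => (x : ℝ)) =
        (Pᵀ.map fun x : ℤ => (x : ℝ)) * (P.map fun x : ℤ => (x : ℝ)) :=
      Matrix.map_mul (f := Int.castRingHom ℝ)
    rw [this]
    rw [show Pᵀ.map (fun x : ℤ => (x : ℝ)) = (P.map fun x : ℤ => (x : ℝ))ᵀ from rfl]
    rw [hO]
    simp
  have hPPt : P * Pᵀ = 1 := mul_eq_one_comm.mp hPtP
  -- Step 2: each column and each row of P has a unique nonzero entry
  have hcol : ∀ j, ∃! i, P i j ≠ 0 := by
    intro j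
    apply squares_sum_one
    have := congrFun (congrFun hPtP j) j
    simp only [Matrix.mul_apply, Matrix.transpose_apply, Matrix.one_apply_eq] at this
    rw [← this]
    congr 1
    ext i
    ring
  have hrow : ∀ i, ∃! j, P i j ≠ 0 := by
    intro i
    apply squares_sum_one
    have := congrFun (congrFun hPPt i) i
    simp only [Matrix.mul_apply, Matrix.transpose_apply, Matrix.one_apply_eq] at this
    rw [← this]
    congr 1
    ext k
    ring
  -- f j := row of the unique nonzero entry of column j
  set f : Fin n → Fin n := fun j => (hcol j).choose with hf
  have hfne : ∀ j, P (f j) j ≠ 0 := fun j => (hcol j).choose_spec.1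
  have hfuniq : ∀ j i, P i j ≠ 0 → i = f j := fun j i h => (hcol j).choose_spec.2 i h
  have hinj : Function.Injective f := by
    intro j j' h
    have h1 : P (f j) j ≠ 0 := hfne j
    have h2 : P (f j) j' ≠ 0 := h ▸ hfne j'
    obtain ⟨j₀, -, huniq⟩ := hrow (f j)
    exact (huniq j h1).trans (huniq j' h2).symm
  have hbij : Function.Bijective f := Finite.injective_iff_bijective.mp hinj
  -- Step 3: compute the entries of PᵀAP
  set A := G.adjMatrix ℤ with hA
  have hentry : ∀ j l, (Pᵀ * A * P) j l = P (f j) j * A (f j) (f l) * P (f l) l := by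
    intro j l
    have hAP : ∀ i, (A * P) i l = A i (f l) * P (f l) l := by
      intro i
      rw [Matrix.mul_apply]
      apply Finset.sum_eq_single (f l)
      · intro k _ hk
        have : P k l = 0 := by
          by_contra hc
          exact hk (hfuniq l k hc)
        rw [this, mul_zero]
      · simp
    rw [Matrix.mul_assoc, Matrix.mul_apply]
    rw [Finset.sum_eq_single (f j)]
    · rw [hAP, Matrix.transpose_apply]; ring
    · intro i _ hi
      have : P i j = 0 := by
        by_contra hc
        exact hi (hfuniq j i hc)
      rw [Matrix.transpose_apply, this, zero_mul]
    · simp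
  -- Step 4: the nonzero entries are ±1
  have hpm : ∀ j, P (f j) j = 1 ∨ P (f j) j = -1 := by
    intro j
    have hsum : ∑ i, P i j ^ 2 = 1 := by
      have := congrFun (congrFun hPtP j) j
      simp only [Matrix.mul_apply, Matrix.transpose_apply, Matrix.one_apply_eq] at this
      rw [← this]
      congr 1; ext i; ring
    have hsq : P (f j) j ^ 2 = 1 := by
      rw [← hsum]
      symm
      apply Finset.sum_eq_single (f j)
      · intro i _ hi
        have : P i j = 0 := by
          by_contra hc
          exact hi (hfuniq j i hc)
        rw [this]; ring
      · simp
    rw [sq, mul_self_eq_one_iff] at hsq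
    exact hsq
  -- Step 5: A (f j) (f l) = A₁ j l
  have hmain : ∀ j l, A (f j) (f l) = G₁.adjMatrix ℤ j l := by
    intro j l
    have h1 := hentry j l
    rw [hcong] at h1
    have h0A : A (f j) (f l) = 0 ∨ A (f j) (f l) = 1 := by
      simp only [hA, SimpleGraph.adjMatrix_apply]
      split <;> simp
    have h0B : G₁.adjMatrix ℤ j l = 0 ∨ G₁.adjMatrix ℤ j l = 1 := by
      simp only [SimpleGraph.adjMatrix_apply]
      split <;> simp
    rcases hpm j with hj | hj <;> rcases hpm l with hl | hl <;>
      rw [hj, hl] at h1 <;> omega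
  -- Step 6: conclude with σ := the inverse of f
  refine ⟨(Equiv.ofBijective f hbij).symm, ?_⟩
  set σ : Equiv.Perm (Fin n) := (Equiv.ofBijective f hbij).symm with hσ
  have hT : (σ.permMatrix ℤ)ᵀ = (σ.symm.toPEquiv.toMatrix : Matrix (Fin n) (Fin n) ℤ) := by
    rw [Equiv.Perm.permMatrix, ← PEquiv.toMatrix_symm, Equiv.toPEquiv_symm]
    simp [hσ]
  rw [hT, PEquiv.toMatrix_toPEquiv_mul, Equiv.Perm.permMatrix,
    PEquiv.mul_toMatrix_toPEquiv]
  ext j l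
  simp only [Matrix.submatrix_apply, id]
  have : σ.symm j = f j := rfl
  rw [show A (σ.symm j) (σ.symm l) = A (f j) (f l) from rfl]
  exact hmain j l
end

section
/- Let G be a connected finite simple graph with combinatorial Laplacian M, and let u > 0. Every entry of the inverse matrix (M + uI)⁻¹ is strictly positive. More precisely, writing (M+uI)⁻¹_{x,y} = (−1)^{x+y} A_{y,x} / det(M+uI) where A_{y,x} is the (y,x)-cofactor of M+uI, all coefficients of the polynomial (−1)^{x+y} A_{y,x} ∈ ℤ[u] are nonnegative, and the polynomial is nonzero. -/
open Matrix Polynomial Finset Filter Topology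
open scoped NNReal

namespace Stmt4Aux

variable {n : ℕ}

/-- "grounded Laplacian-like": nonpositive off-diagonal, nonnegative row sums. -/
def Good (M : Matrix (Fin n) (Fin n) ℝ) : Prop :=
  (∀ i j, i ≠ j → M i j ≤ 0) ∧ (∀ i, 0 ≤ ∑ j, M i j)

theorem Good.diag_nonneg {M : Matrix (Fin n) (Fin n) ℝ} (hM : Good M) (i : Fin n) :
    0 ≤ M i i := by
  have h := hM.2 i
  rw [← Finset.add_sum_erase _ _ (Finset.mem_univ i)] at h
  have : ∑ j ∈ Finset.univ.erase i, M i j ≤ 0 :=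
    Finset.sum_nonpos fun j hj => hM.1 i j (Finset.ne_of_mem_erase hj).symm
  linarith

noncomputable def cc (M : Matrix (Fin n) (Fin n) ℝ) (u : ℝ) : ℝ := u + 1 + ∑ i, M i i

noncomputable def RR (M : Matrix (Fin n) (Fin n) ℝ) (u : ℝ) : Matrix (Fin n) (Fin n) ℝ :=
  (cc M u - u) • 1 - M

theorem cc_pos {M : Matrix (Fin n) (Fin n) ℝ} (hM : Good M) {u : ℝ} (hu : 0 < u) :
    0 < cc M u := by
  have : 0 ≤ ∑ i, M i i := Finset.sum_nonneg fun i _ => hM.diag_nonneg i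
  unfold cc; linarith

theorem cu_nonneg {M : Matrix (Fin n) (Fin n) ℝ} (hM : Good M) {u : ℝ} (hu : 0 < u) :
    0 ≤ cc M u - u := by
  have : 0 ≤ ∑ i, M i i := Finset.sum_nonneg fun i _ => hM.diag_nonneg i
  unfold cc; linarith

theorem RR_apply (M : Matrix (Fin n) (Fin n) ℝ) (u : ℝ) (i j : Fin n) :
    RR M u i j = (if i = j then cc M u - u else 0) - M i j := by
  simp [RR, Matrix.sub_apply, Matrix.smul_apply, Matrix.one_apply, apply_ite]

theorem RR_nonneg {M : Matrix (Fin n) (Fin n) ℝ} (hM : Good M) {u : ℝ} (hu : 0 < u)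
    (i j : Fin n) : 0 ≤ RR M u i j := by
  rw [RR_apply]
  rcases eq_or_ne i j with rfl | h
  · have h1 : M i i ≤ ∑ k, M k k := Finset.single_le_sum (fun k _ => hM.diag_nonneg k)
      (Finset.mem_univ i)
    simp only [eq_self_iff_true, if_true, cc]
    linarith
  · simpa [h] using hM.1 i j h

theorem RR_diag_pos {M : Matrix (Fin n) (Fin n) ℝ} (hM : Good M) {u : ℝ} (hu : 0 < u)
    (i : Fin n) : 0 < RR M u i i := by
  rw [RR_apply]
  have h1 : M i i ≤ ∑ k, M k k := Finset.single_le_sum (fun k _ => hM.diag_nonneg k)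
    (Finset.mem_univ i)
  simp only [eq_self_iff_true, if_true, cc]
  linarith

theorem RR_row_sum {M : Matrix (Fin n) (Fin n) ℝ} (hM : Good M) {u : ℝ} (hu : 0 < u)
    (i : Fin n) : ∑ j, RR M u i j ≤ cc M u - u := by
  have h : ∑ j, RR M u i j = (cc M u - u) - ∑ j, M i j := by
    simp [RR_apply, Finset.sum_sub_distrib, Finset.sum_ite_eq' Finset.univ i]
  rw [h]
  have := hM.2 i
  linarith

theorem mat_pow_nonneg {A : Matrix (Fin n) (Fin n) ℝ} (h : ∀ i j, 0 ≤ A i j) :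
    ∀ (k : ℕ) (i j : Fin n), 0 ≤ (A ^ k) i j := by
  intro k
  induction k with
  | zero => intro i j; rw [pow_zero, Matrix.one_apply]; positivity
  | succ k ih =>
      intro i j
      rw [pow_succ, Matrix.mul_apply]
      exact Finset.sum_nonneg fun w _ => mul_nonneg (ih i w) (h w j)

section Core

attribute [local instance] Matrix.linftyOpNormedRing Matrix.linftyOpNormedAlgebra

noncomputable def entryCLM (x y : Fin n) : Matrix (Fin n) (Fin n) ℝ →L[ℝ] ℝ :=
  LinearMap.mkContinuous
    { toFun := fun A => A x y
      map_add' := fun A B => rfl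
      map_smul' := fun c A => rfl } 1
    (by
      intro A
      rw [one_mul]
      have h1 : ‖A x y‖₊ ≤ ∑ j, ‖A x j‖₊ :=
        Finset.single_le_sum (f := fun j => ‖A x j‖₊) (fun j _ => zero_le) (Finset.mem_univ y)
      have h2 : (∑ j, ‖A x j‖₊) ≤ ‖A‖₊ := by
        rw [Matrix.linfty_opNNNorm_def]
        exact Finset.le_sup (f := fun i => ∑ j, ‖A i j‖₊) (Finset.mem_univ x)
      have h3 : ‖A x y‖₊ ≤ ‖A‖₊ := le_trans h1 h2
      exact_mod_cast h3)

theorem norm_le_of_row_sums {A : Matrix (Fin n) (Fin n) ℝ} {b : ℝ} (hb : 0 ≤ b)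
    (h : ∀ i, ∑ j, ‖A i j‖ ≤ b) : ‖A‖ ≤ b := by
  rw [Matrix.linfty_opNorm_def]
  have : (Finset.univ.sup fun i : Fin n => ∑ j, ‖A i j‖₊) ≤ ⟨b, hb⟩ := by
    refine Finset.sup_le fun i _ => ?_
    have := h i
    refine NNReal.coe_le_coe.mp ?_
    have h' : ((∑ j, ‖A i j‖₊ : ℝ≥0) : ℝ) ≤ b := by push_cast; simpa using this
    exact h'
  exact_mod_cast this

theorem core {M : Matrix (Fin n) (Fin n) ℝ} (hM : Good M) {u : ℝ} (hu : 0 < u) :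
    ∃ T : Matrix (Fin n) (Fin n) ℝ,
      (M + u • 1) * T = 1 ∧ (∀ x y, 0 ≤ T x y) ∧
      ∀ (k : ℕ) (x y : Fin n), (cc M u)⁻¹ ^ (k + 1) * (RR M u ^ k) x y ≤ T x y := by
  haveI : CompleteSpace (Matrix (Fin n) (Fin n) ℝ) := FiniteDimensional.complete ℝ _
  have hcpos : 0 < cc M u := cc_pos hM hu
  set c := cc M u with hc
  set R := RR M u with hRdef
  set t : Matrix (Fin n) (Fin n) ℝ := c⁻¹ • R with htdef
  have htent : ∀ i j, 0 ≤ t i j := fun i j => by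
    rw [htdef, Matrix.smul_apply, smul_eq_mul]
    exact mul_nonneg (inv_nonneg.mpr hcpos.le) (RR_nonneg hM hu i j)
  have htpow : ∀ (k : ℕ) (i j : Fin n), 0 ≤ (t ^ k) i j := mat_pow_nonneg htent
  have htnorm : ‖t‖ < 1 := by
    have hRnorm : ‖R‖ ≤ c - u := by
      refine norm_le_of_row_sums (cu_nonneg hM hu) fun i => ?_
      have h : ∀ j, ‖R i j‖ = R i j := fun j => Real.norm_of_nonneg (RR_nonneg hM hu i j)
      simp_rw [h]
      exact RR_row_sum hM hu i
    have h1 : ‖t‖ ≤ c⁻¹ * (c - u) := by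
      rw [htdef, norm_smul, Real.norm_eq_abs, abs_of_nonneg (inv_nonneg.mpr hcpos.le)]
      exact mul_le_mul_of_nonneg_left hRnorm (inv_nonneg.mpr hcpos.le)
    have h2 : c⁻¹ * (c - u) = 1 - c⁻¹ * u := by
      field_simp
    have h3 : 0 < c⁻¹ * u := mul_pos (inv_pos.mpr hcpos) hu
    linarith
  have hsum : Summable (fun k : ℕ => t ^ k) := summable_geometric_of_norm_lt_one htnorm
  set S := ∑' k : ℕ, t ^ k with hS
  have hSentry : ∀ x y, S x y = ∑' k : ℕ, (t ^ k) x y := fun x y =>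
    (entryCLM x y).map_tsum hsum
  have hgsum : ∀ x y, Summable (fun k : ℕ => (t ^ k) x y) := fun x y =>
    hsum.map (entryCLM x y).toLinearMap.toAddMonoidHom (entryCLM x y).continuous
  refine ⟨c⁻¹ • S, ?_, ?_, ?_⟩
  · have hB : M + u • 1 = c • (1 - t) := by
      rw [smul_sub, htdef, smul_smul, mul_inv_cancel₀ hcpos.ne', one_smul, hRdef, RR, sub_smul]
      rw [← hc]
      abel
    rw [hB, smul_mul_assoc, mul_smul_comm, smul_smul, mul_inv_cancel₀ hcpos.ne', one_smul]
    exact mul_neg_geom_series t htnorm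
  · intro x y
    rw [Matrix.smul_apply, smul_eq_mul]
    refine mul_nonneg (inv_nonneg.mpr hcpos.le) ?_
    rw [hSentry]
    exact tsum_nonneg fun k => htpow k x y
  · intro k x y
    have h1 : (t ^ k) x y ≤ S x y := by
      rw [hSentry]
      exact Summable.le_tsum (hgsum x y) k fun j _ => htpow j x y
    have h2 : (t ^ k) x y = c⁻¹ ^ k * (R ^ k) x y := by
      rw [htdef, _root_.smul_pow, Matrix.smul_apply, smul_eq_mul]
    rw [Matrix.smul_apply, smul_eq_mul, pow_succ', mul_assoc, ← h2]
    exact mul_le_mul_of_nonneg_left h1 (inv_nonneg.mpr hcpos.le)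

end Core

theorem det_ne_zero {M : Matrix (Fin n) (Fin n) ℝ} (hM : Good M) {u : ℝ} (hu : 0 < u) :
    det (M + u • 1) ≠ 0 := by
  obtain ⟨T, hT1, -, -⟩ := core hM hu
  have h := congrArg det hT1
  rw [det_mul, det_one] at h
  exact left_ne_zero_of_mul_eq_one h

theorem inv_entry_nonneg {M : Matrix (Fin n) (Fin n) ℝ} (hM : Good M) {u : ℝ} (hu : 0 < u)
    (x y : Fin n) : 0 ≤ (M + u • 1)⁻¹ x y := by
  obtain ⟨T, hT1, hT2, -⟩ := core hM hu
  rw [Matrix.inv_eq_right_inv hT1]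
  exact hT2 x y

theorem inv_entry_ge {M : Matrix (Fin n) (Fin n) ℝ} (hM : Good M) {u : ℝ} (hu : 0 < u)
    (k : ℕ) (x y : Fin n) :
    (cc M u)⁻¹ ^ (k + 1) * (RR M u ^ k) x y ≤ (M + u • 1)⁻¹ x y := by
  obtain ⟨T, hT1, -, hT3⟩ := core hM hu
  rw [Matrix.inv_eq_right_inv hT1]
  exact hT3 k x y

/-- evaluation of the polynomial matrix -/
theorem map_eval_matrix (M : Matrix (Fin n) (Fin n) ℝ) (r : ℝ) :
    (M.map C + (X : ℝ[X]) • 1).map (evalRingHom r) = M + r • 1 := by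
  ext i j
  by_cases h : i = j
  · subst h
    simp [Matrix.map_apply, Matrix.add_apply, Matrix.smul_apply, Matrix.one_apply]
  · simp [Matrix.map_apply, Matrix.add_apply, Matrix.smul_apply, Matrix.one_apply, h]

theorem eval_det_poly (M : Matrix (Fin n) (Fin n) ℝ) (r : ℝ) :
    (det (M.map C + (X : ℝ[X]) • 1)).eval r = det (M + r • 1) := by
  have h := (evalRingHom r).map_det (M.map C + (X : ℝ[X]) • 1)
  rw [RingHom.mapMatrix_apply, map_eval_matrix] at h
  rw [← coe_evalRingHom]
  exact h

theorem eval_adj_poly (M : Matrix (Fin n) (Fin n) ℝ) (r : ℝ) (x y : Fin n) :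
    (adjugate (M.map C + (X : ℝ[X]) • 1) x y).eval r = adjugate (M + r • 1) x y := by
  have h := (evalRingHom r).map_adjugate (M.map C + (X : ℝ[X]) • 1)
  simp only [RingHom.mapMatrix_apply] at h
  rw [map_eval_matrix] at h
  have := congrFun (congrFun h x) y
  simpa [Matrix.map_apply] using this

theorem det_poly_eq_charpoly (M : Matrix (Fin n) (Fin n) ℝ) :
    det (M.map C + (X : ℝ[X]) • 1) = (-M).charpoly := by
  unfold Matrix.charpoly
  congr 1
  ext i j
  rcases eq_or_ne i j with rfl | h
  · rw [charmatrix_apply_eq]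
    simp [Matrix.add_apply, Matrix.smul_apply, Matrix.one_apply]
    ring
  · rw [charmatrix_apply_ne _ _ _ h]
    simp [Matrix.add_apply, Matrix.smul_apply, Matrix.one_apply, h]

theorem det_add_smul_pos {M : Matrix (Fin n) (Fin n) ℝ} (hM : Good M) {u : ℝ} (hu : 0 < u) :
    0 < det (M + u • 1) := by
  rcases Nat.eq_zero_or_pos n with hn | hn
  · subst hn
    rw [Matrix.det_isEmpty]
    norm_num
  · set P : ℝ[X] := det (M.map C + (X : ℝ[X]) • 1) with hP
    have hmonic : P.Monic := by rw [hP, det_poly_eq_charpoly]; exact (-M).charpoly_monic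
    have hdeg : 0 < P.degree := by
      have h1 : P.natDegree = n := by
        rw [hP, det_poly_eq_charpoly, charpoly_natDegree_eq_dim, Fintype.card_fin]
      rw [← Polynomial.natDegree_pos_iff_degree_pos, h1]
      exact hn
    have htend : Tendsto (fun x => P.eval x) atTop atTop :=
      P.tendsto_atTop_of_leadingCoeff_nonneg hdeg (by rw [hmonic.leadingCoeff]; norm_num)
    by_contra hcon
    push_neg at hcon
    have hne : P.eval u ≠ 0 := by rw [eval_det_poly]; exact det_ne_zero hM hu
    have hlt : P.eval u < 0 := by
      rcases lt_or_eq_of_le hcon with h | h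
      · rwa [eval_det_poly]
      · exact absurd (by rw [eval_det_poly]; exact h) hne
    obtain ⟨T, hTu, hTpos⟩ := ((htend.eventually (eventually_gt_atTop 0)).and
      (eventually_ge_atTop u)).exists
    have hsub := intermediate_value_Icc hTpos (Polynomial.continuous P).continuousOn
    have h0 : (0 : ℝ) ∈ Set.Icc (P.eval u) (P.eval T) := ⟨hlt.le, hTu.le⟩
    obtain ⟨z, hz, hz0⟩ := hsub h0
    have hzu : 0 < z := lt_of_lt_of_le hu hz.1
    have : P.eval z ≠ 0 := by rw [eval_det_poly]; exact det_ne_zero hM hzu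
    exact this hz0

theorem adj_eq_det_mul_inv {M : Matrix (Fin n) (Fin n) ℝ} (hM : Good M) {u : ℝ} (hu : 0 < u)
    (x y : Fin n) :
    adjugate (M + u • 1) x y = det (M + u • 1) * (M + u • 1)⁻¹ x y := by
  rw [Matrix.inv_def, Matrix.smul_apply, smul_eq_mul, Ring.inverse_eq_inv']
  rw [← mul_assoc, mul_inv_cancel₀ (det_ne_zero hM hu), one_mul]

theorem adj_nonneg {M : Matrix (Fin n) (Fin n) ℝ} (hM : Good M) (x y : Fin n) :
    0 ≤ adjugate M x y := by
  have key : ∀ u : ℝ, 0 < u → 0 ≤ adjugate (M + u • 1) x y := by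
    intro u hu
    rw [adj_eq_det_mul_inv hM hu]
    exact mul_nonneg (det_add_smul_pos hM hu).le (inv_entry_nonneg hM hu x y)
  set p : ℝ[X] := adjugate (M.map C + (X : ℝ[X]) • 1) x y with hp
  have h0 : adjugate M x y = p.eval 0 := by
    rw [hp, eval_adj_poly]
    norm_num
  rw [h0]
  have cont : Tendsto (fun r => p.eval r) (𝓝[>] (0:ℝ)) (𝓝 (p.eval 0)) :=
    ((Polynomial.continuous p).tendsto 0).mono_left nhdsWithin_le_nhds
  refine ge_of_tendsto cont ?_
  refine eventually_nhdsWithin_of_forall fun r hr => ?_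
  rw [eval_adj_poly]
  exact key r hr

theorem adj_expand (M : Matrix (Fin n) (Fin n) ℝ) (x y : Fin n) :
    adjugate (M.map C + (X : ℝ[X]) • 1) x y =
      ∑ s : Finset (Fin n), if y ∈ s then 0 else
        (X : ℝ[X]) ^ s.card * C (det (s.piecewise (fun i => Pi.single i (1:ℝ))
          (M.updateRow y (Pi.single x 1)))) := by
  rw [adjugate_apply]
  set A : Matrix (Fin n) (Fin n) ℝ[X] :=
    ((X : ℝ[X]) • (1 : Matrix (Fin n) (Fin n) ℝ[X])).updateRow y 0 with hA
  set B : Matrix (Fin n) (Fin n) ℝ[X] := (M.map C).updateRow y (Pi.single x 1) with hB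
  have hsplit : (M.map C + (X : ℝ[X]) • 1).updateRow y (Pi.single x 1) = A + B := by
    ext i j
    by_cases h : i = y
    · subst h; simp [hA, hB, Matrix.add_apply]
    · simp only [hA, hB, Matrix.updateRow_ne h, Matrix.add_apply]
      ring
  rw [hsplit]
  have hdet : det (A + B) = ∑ s : Finset (Fin n), det (s.piecewise A B) :=
    Matrix.detRowAlternating.toMultilinearMap.map_add_univ A B
  rw [hdet]
  refine Finset.sum_congr rfl fun s _ => ?_
  by_cases hy : y ∈ s
  · rw [if_pos hy]
    apply Matrix.det_eq_zero_of_row_eq_zero y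
    intro j
    have h1 : (s.piecewise A B) y j = A y j := by exact congrFun (s.piecewise_eq_of_mem _ _ hy) j
    rw [h1, hA]
    simp
  · rw [if_neg hy]
    set E : Matrix (Fin n) (Fin n) ℝ := s.piecewise (fun i => Pi.single i (1:ℝ))
      (M.updateRow y (Pi.single x 1)) with hE
    have hm : s.piecewise A B = s.piecewise (fun i => (X:ℝ[X]) • (E.map C) i) (E.map C) := by
      funext i
      by_cases hi : i ∈ s
      · erw [s.piecewise_eq_of_mem _ _ hi, s.piecewise_eq_of_mem _ _ hi]
        have hiy : i ≠ y := fun h => hy (h ▸ hi)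
        funext j
        have hEi : E i = Pi.single i (1:ℝ) := s.piecewise_eq_of_mem _ _ hi
        simp only [hA, Matrix.updateRow_ne hiy, Pi.smul_apply, Matrix.map_apply, hEi,
          Matrix.smul_apply, Matrix.one_apply, Pi.single_apply, smul_eq_mul]
        by_cases hij : i = j <;> simp [hij, eq_comm]
      · erw [s.piecewise_eq_of_notMem _ _ hi, s.piecewise_eq_of_notMem _ _ hi]
        funext j
        have hEi : E i = (M.updateRow y (Pi.single x 1)) i := s.piecewise_eq_of_notMem _ _ hi
        rw [hB]
        by_cases hiy : i = y
        · subst hiy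
          simp only [Matrix.updateRow_self, Matrix.map_apply, hEi, Pi.single_apply]
          by_cases hjx : j = x <;> simp [hjx]
        · simp [Matrix.updateRow_ne hiy, Matrix.map_apply, hEi]
    rw [hm]
    have hps : det (s.piecewise (fun i => (X:ℝ[X]) • (E.map C) i) (E.map C)) =
        (∏ _i ∈ s, (X : ℝ[X])) • det (E.map C) :=
      Matrix.detRowAlternating.toMultilinearMap.map_piecewise_smul
        (fun _ : Fin n => (X : ℝ[X])) (E.map C) s
    rw [hps, Finset.prod_const, smul_eq_mul]
    congr 1
    have := (C : ℝ →+* ℝ[X]).map_det E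
    rw [RingHom.mapMatrix_apply] at this
    exact this.symm

theorem good_piecewise {M : Matrix (Fin n) (Fin n) ℝ} (hM : Good M) (s : Finset (Fin n)) :
    Good (s.piecewise (fun i => Pi.single i (1:ℝ)) M : Matrix (Fin n) (Fin n) ℝ) := by
  constructor
  · intro i j hij
    by_cases hi : i ∈ s
    · erw [s.piecewise_eq_of_mem _ _ hi]
      simp [Pi.single_apply, Ne.symm hij]
    · erw [s.piecewise_eq_of_notMem _ _ hi]
      exact hM.1 i j hij
  · intro i
    by_cases hi : i ∈ s
    · erw [s.piecewise_eq_of_mem _ _ hi]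
      simp [Finset.sum_pi_single']
    · erw [s.piecewise_eq_of_notMem _ _ hi]
      exact hM.2 i

theorem det_piecewise_eq_adj {M : Matrix (Fin n) (Fin n) ℝ} {s : Finset (Fin n)}
    {x y : Fin n} (hy : y ∉ s) :
    det (s.piecewise (fun i => Pi.single i (1:ℝ)) (M.updateRow y (Pi.single x 1))) =
      adjugate (s.piecewise (fun i => Pi.single i (1:ℝ)) M : Matrix (Fin n) (Fin n) ℝ) x y := by
  erw [adjugate_apply]
  congr 1
  funext i
  by_cases hi : i ∈ s
  · have hiy : i ≠ y := fun h => hy (h ▸ hi)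
    erw [s.piecewise_eq_of_mem _ _ hi, Matrix.updateRow_ne hiy, s.piecewise_eq_of_mem _ _ hi]
  · by_cases hiy : i = y
    · subst hiy
      erw [s.piecewise_eq_of_notMem _ _ hi, Matrix.updateRow_self, Matrix.updateRow_self]
    · erw [s.piecewise_eq_of_notMem _ _ hi, Matrix.updateRow_ne hiy, Matrix.updateRow_ne hiy,
        s.piecewise_eq_of_notMem _ _ hi]

theorem adj_coeff_nonneg {M : Matrix (Fin n) (Fin n) ℝ} (hM : Good M) (x y : Fin n) (k : ℕ) :
    0 ≤ (adjugate (M.map C + (X : ℝ[X]) • 1) x y).coeff k := by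
  rw [adj_expand, finset_sum_coeff]
  refine Finset.sum_nonneg fun s _ => ?_
  by_cases hy : y ∈ s
  · simp [hy]
  · rw [if_neg hy, mul_comm, coeff_C_mul_X_pow]
    by_cases hk : k = s.card
    · rw [if_pos hk, det_piecewise_eq_adj hy]
      exact adj_nonneg (good_piecewise hM s) x y
    · rw [if_neg hk]

section Graph

variable (G : SimpleGraph (Fin n)) [DecidableRel G.Adj]

theorem lap_offdiag {i j : Fin n} (hij : i ≠ j) :
    G.lapMatrix ℝ i j = -(if G.Adj i j then (1:ℝ) else 0) := by
  simp [SimpleGraph.lapMatrix, SimpleGraph.degMatrix, Matrix.sub_apply,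
    Matrix.diagonal_apply_ne _ hij]

theorem lap_good : Good (G.lapMatrix ℝ) := by
  constructor
  · intro i j hij
    rw [lap_offdiag G hij]
    by_cases h : G.Adj i j <;> simp [h]
  · intro i
    have h := congrFun (G.lapMatrix_mulVec_const_eq_zero (R := ℝ)) i
    simp only [Matrix.mulVec, dotProduct, mul_one, Pi.zero_apply] at h
    rw [h]

theorem RR_pow_walk_pos {u : ℝ} (hu : 0 < u) {x y : Fin n} (W : G.Walk x y) :
    0 < ((RR (G.lapMatrix ℝ) u) ^ W.length) x y := by
  induction W with
  | nil =>
      simpa [pow_zero, Matrix.one_apply] using zero_lt_one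
  | @cons a b c hadj W ih =>
      have hGood := lap_good G
      rw [SimpleGraph.Walk.length_cons, pow_succ', Matrix.mul_apply]
      refine Finset.sum_pos' (fun w _ => mul_nonneg (RR_nonneg hGood hu a w) ?_) ?_
      · exact mat_pow_nonneg (RR_nonneg hGood hu) _ _ _
      · refine ⟨b, Finset.mem_univ b, mul_pos ?_ ih⟩
        have hab : a ≠ b := hadj.ne
        rw [RR_apply, if_neg hab, lap_offdiag G hab, if_pos hadj]
        norm_num

theorem inv_entry_pos (hconn : G.Connected) {u : ℝ} (hu : 0 < u) (x y : Fin n) :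
    0 < (G.lapMatrix ℝ + u • 1)⁻¹ x y := by
  have hGood := lap_good G
  obtain ⟨W⟩ := hconn.preconnected x y
  refine lt_of_lt_of_le ?_ (inv_entry_ge hGood hu W.length x y)
  exact mul_pos (pow_pos (inv_pos.mpr (cc_pos hGood hu)) _) (RR_pow_walk_pos G hu W)

theorem lap_map {R S : Type} [Ring R] [Ring S] (f : R →+* S) :
    (G.lapMatrix R).map f = G.lapMatrix S := by
  ext i j
  simp only [SimpleGraph.lapMatrix, SimpleGraph.degMatrix, SimpleGraph.adjMatrix,
    Matrix.sub_apply, Matrix.map_apply, Matrix.diagonal, Matrix.of_apply, map_sub]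
  congr 1
  · split <;> simp
  · split <;> simp

theorem smul_one_map {R S : Type} [CommRing R] [CommRing S] (f : R →+* S) (r : R) :
    ((r • (1 : Matrix (Fin n) (Fin n) R)).map f) = f r • (1 : Matrix (Fin n) (Fin n) S) := by
  ext i j
  simp only [Matrix.map_apply, Matrix.smul_apply, Matrix.one_apply, smul_eq_mul]
  split <;> simp

end Graph

end Stmt4Aux

open Stmt4Aux in

/-- For a connected graph with Laplacian `M` and `u > 0`, every entry of `(M + uI)⁻¹` is
strictly positive; more precisely, writing the entries of the inverse as
`(−1)^{x+y} A_{y,x} / det(M+uI)` (i.e. via the adjugate of `M + uI` over `ℤ[u]`), all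
coefficients of the polynomial `(−1)^{x+y} A_{y,x} = adjugate(M + X•I) x y ∈ ℤ[u]` are
nonnegative and the polynomial is nonzero. -/
theorem stmt_4 (n : ℕ) (G : SimpleGraph (Fin n)) [DecidableRel G.Adj]
    (hconn : G.Connected) :
    (∀ u : ℝ, 0 < u → ∀ x y : Fin n,
      0 < (G.lapMatrix ℝ + u • (1 : Matrix (Fin n) (Fin n) ℝ))⁻¹ x y) ∧
    ∀ x y : Fin n,
      (∀ k : ℕ, 0 ≤ ((G.lapMatrix (Polynomial ℤ) +
          (Polynomial.X : Polynomial ℤ) • 1).adjugate x y).coeff k) ∧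
      (G.lapMatrix (Polynomial ℤ) +
          (Polynomial.X : Polynomial ℤ) • 1).adjugate x y ≠ 0 := by
  constructor
  · intro u hu x y
    exact inv_entry_pos G hconn hu x y
  · intro x y
    set φ : Polynomial ℤ →+* ℝ[X] := Polynomial.mapRingHom (Int.castRingHom ℝ) with hφ
    have hmat : (G.lapMatrix (Polynomial ℤ) + (Polynomial.X : Polynomial ℤ) • 1).map φ =
        (G.lapMatrix ℝ).map C + (X : ℝ[X]) • 1 := by
      rw [Matrix.map_add _ (fun a b => map_add φ a b)]
      rw [lap_map G φ, smul_one_map (n := n) φ X, ← lap_map G (C : ℝ →+* ℝ[X])]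
      have hX : φ X = X := by simp [hφ]
      rw [hX]
    have hadj := φ.map_adjugate (G.lapMatrix (Polynomial ℤ) + (Polynomial.X : Polynomial ℤ) • 1)
    simp only [RingHom.mapMatrix_apply] at hadj
    rw [hmat] at hadj
    have hentry : ((G.lapMatrix (Polynomial ℤ) +
        (Polynomial.X : Polynomial ℤ) • 1).adjugate x y).map (Int.castRingHom ℝ) =
        adjugate ((G.lapMatrix ℝ).map C + (X : ℝ[X]) • 1) x y := by
      have := congrFun (congrFun hadj x) y
      simpa [Matrix.map_apply, hφ] using this
    constructor
    · intro k
      have h1 : (0:ℝ) ≤ (adjugate ((G.lapMatrix ℝ).map C + (X : ℝ[X]) • 1) x y).coeff k :=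
        adj_coeff_nonneg (lap_good G) x y k
      rw [← hentry, Polynomial.coeff_map] at h1
      simp only [eq_intCast, Int.cast_nonneg] at h1
      exact_mod_cast h1
    · intro hzero
      have h2 : adjugate ((G.lapMatrix ℝ).map C + (X : ℝ[X]) • 1) x y = 0 := by
        rw [← hentry, hzero, Polynomial.map_zero]
      have h3 := eval_adj_poly (G.lapMatrix ℝ) 1 x y
      rw [h2] at h3
      have h4 : 0 < adjugate (G.lapMatrix ℝ + (1:ℝ) • 1) x y := by
        rw [adj_eq_det_mul_inv (lap_good G) one_pos]
        exact mul_pos (det_add_smul_pos (lap_good G) one_pos)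
          (inv_entry_pos G hconn one_pos x y)
      rw [← h3] at h4
      simp at h4
end

section
/- Let G₁ be a graph with a vertex X, let G₂ be a graph with distinguished vertices Y₁,…,Y_k, and let G(X) be the graph obtained as the disjoint union of G₁ and G₂ together with an edge from X to each Y_i. Then the equivalence class over ℤ of the quadratic form represented by the combinatorial Laplacian of G(X) does not depend on the choice of the vertex X in G₁. Equivalently, for any two vertices X, X' of G₁, there exists T ∈ GL(N,ℤ) with Tᵀ·L(G(X))·T = L(G(X')), where N = |G₁| + |G₂|. -/
open Matrix

def glueGraph {V₁ V₂ : Type*} (G₁ : SimpleGraph V₁) (G₂ : SimpleGraph V₂)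
    (X : V₁) {k : ℕ} (Y : Fin k → V₂) : SimpleGraph (V₁ ⊕ V₂) where
  Adj v w :=
    match v, w with
    | Sum.inl a, Sum.inl b => G₁.Adj a b
    | Sum.inr a, Sum.inr b => G₂.Adj a b
    | Sum.inl a, Sum.inr b => a = X ∧ ∃ i, Y i = b
    | Sum.inr a, Sum.inl b => b = X ∧ ∃ i, Y i = a
  symm := by
    refine ⟨?_⟩
    rintro (a | a) (b | b) h
    · exact G₁.adj_symm h
    · exact h
    · exact h
    · exact G₂.adj_symm h
  loopless := by
    refine ⟨?_⟩
    rintro (a | a) h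
    · exact G₁.irrefl h
    · exact G₂.irrefl h

instance glueGraph.adjDecidable {V₁ V₂ : Type*} [DecidableEq V₁] [DecidableEq V₂]
    (G₁ : SimpleGraph V₁) (G₂ : SimpleGraph V₂) (X : V₁) {k : ℕ} (Y : Fin k → V₂)
    [DecidableRel G₁.Adj] [DecidableRel G₂.Adj] :
    DecidableRel (glueGraph G₁ G₂ X Y).Adj := fun v w =>
  match v, w with
  | Sum.inl a, Sum.inl b => inferInstanceAs (Decidable (G₁.Adj a b))
  | Sum.inr a, Sum.inr b => inferInstanceAs (Decidable (G₂.Adj a b))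
  | Sum.inl a, Sum.inr b => inferInstanceAs (Decidable (a = X ∧ ∃ i, Y i = b))
  | Sum.inr a, Sum.inl b => inferInstanceAs (Decidable (b = X ∧ ∃ i, Y i = a))

section Aux

variable {V₁ V₂ : Type*} [Fintype V₁] [Fintype V₂] [DecidableEq V₁] [DecidableEq V₂]

/-- Elementary "add all `V₂`-rows to row `X`" matrix (transposed form). -/
def Nm (X : V₁) : Matrix (V₁ ⊕ V₂) (V₁ ⊕ V₂) ℤ :=
  Matrix.of fun i j => Sum.elim (fun _ => 0) (fun _ => if j = Sum.inl X then 1 else 0) i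

lemma Nm_mul_Nm (X X' : V₁) : (Nm X : Matrix (V₁ ⊕ V₂) (V₁ ⊕ V₂) ℤ) * Nm X' = 0 := by
  ext i j
  rw [Matrix.mul_apply]
  refine Finset.sum_eq_zero ?_
  rintro (a | a) -
  · rcases i with a' | a' <;> simp [Nm]
  · simp [Nm]

lemma one_add_Nm_mul (X : V₁) :
    ((1 + Nm X) * (1 - Nm X) : Matrix (V₁ ⊕ V₂) (V₁ ⊕ V₂) ℤ) = 1 := by
  have h := Nm_mul_Nm (V₂ := V₂) X X
  have e : ((1 + Nm X) * (1 - Nm X) : Matrix (V₁ ⊕ V₂) (V₁ ⊕ V₂) ℤ)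
      = 1 - Nm X * Nm X := by noncomm_ring
  rw [e, h, sub_zero]

variable {k : ℕ} (Y : Fin k → V₂)

/-- number of distinct distinguished vertices -/
def mY : ℕ := (Finset.univ.filter fun y : V₂ => ∃ i, Y i = y).card

lemma sum_indicator_mY : (∑ y : V₂, if ∃ i, Y i = y then (1 : ℤ) else 0) = (mY Y : ℤ) := by
  rw [Finset.sum_boole, mY]

def Rm (X : V₁) : Matrix (V₁ ⊕ V₂) (V₁ ⊕ V₂) ℤ :=
  Matrix.of fun i j =>
    if i = Sum.inl X then
      Sum.elim (fun b => if b = X then -(mY Y : ℤ) else 0)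
        (fun b => if ∃ i, Y i = b then 1 else 0) j
    else 0

variable (G₁ : SimpleGraph V₁) (G₂ : SimpleGraph V₂)
  [DecidableRel G₁.Adj] [DecidableRel G₂.Adj]

lemma lap_apply {V : Type*} [Fintype V] [DecidableEq V] (G : SimpleGraph V)
    [DecidableRel G.Adj] (i j : V) :
    G.lapMatrix ℤ i j = (if i = j then (G.degree i : ℤ) else 0)
      - (if G.Adj i j then 1 else 0) := by
  simp [SimpleGraph.lapMatrix, SimpleGraph.degMatrix, Matrix.diagonal_apply]

variable (X : V₁)

lemma glue_adj_ll (a b : V₁) :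
    (glueGraph G₁ G₂ X Y).Adj (Sum.inl a) (Sum.inl b) ↔ G₁.Adj a b := Iff.rfl
lemma glue_adj_rr (a b : V₂) :
    (glueGraph G₁ G₂ X Y).Adj (Sum.inr a) (Sum.inr b) ↔ G₂.Adj a b := Iff.rfl
lemma glue_adj_lr (a : V₁) (b : V₂) :
    (glueGraph G₁ G₂ X Y).Adj (Sum.inl a) (Sum.inr b) ↔ a = X ∧ ∃ i, Y i = b := Iff.rfl
lemma glue_adj_rl (a : V₂) (b : V₁) :
    (glueGraph G₁ G₂ X Y).Adj (Sum.inr a) (Sum.inl b) ↔ b = X ∧ ∃ i, Y i = a := Iff.rfl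

lemma glue_degree_inr (b : V₂) :
    (((glueGraph G₁ G₂ X Y).degree (Sum.inr b) : ℤ)) =
      (G₂.degree b : ℤ) + (if ∃ i, Y i = b then 1 else 0) := by
  rw [SimpleGraph.degree_eq_sum_if_adj, SimpleGraph.degree_eq_sum_if_adj,
    Fintype.sum_sum_type]
  simp only [glue_adj_rl, glue_adj_rr, ite_and]
  rw [Finset.sum_ite_eq' Finset.univ X (fun _ => if ∃ i, Y i = b then (1:ℤ) else 0)]
  simp [add_comm]

lemma glue_degree_inl (a : V₁) :
    (((glueGraph G₁ G₂ X Y).degree (Sum.inl a) : ℤ)) =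
      (G₁.degree a : ℤ) + (if a = X then (mY Y : ℤ) else 0) := by
  rw [SimpleGraph.degree_eq_sum_if_adj, SimpleGraph.degree_eq_sum_if_adj,
    Fintype.sum_sum_type]
  simp only [glue_adj_ll, glue_adj_lr, ite_and]
  congr 1
  by_cases h : a = X <;> simp [h, sum_indicator_mY Y]

lemma NtL : (Nm X)ᵀ * (glueGraph G₁ G₂ X Y).lapMatrix ℤ = Rm Y X := by
  ext i j
  rw [Matrix.mul_apply]
  simp only [Matrix.transpose_apply]
  rw [Fintype.sum_sum_type]
  have h0 : (∑ a : V₁, Nm X (Sum.inl a) i * (glueGraph G₁ G₂ X Y).lapMatrix ℤ (Sum.inl a) j)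
      = 0 := by
    refine Finset.sum_eq_zero fun a _ => ?_
    simp [Nm]
  rw [h0, zero_add]
  by_cases hi : i = Sum.inl X
  · subst hi
    rcases j with b | b
    · have hs : ∀ y : V₂, Nm (V₂ := V₂) X (Sum.inr y) (Sum.inl X)
          * (glueGraph G₁ G₂ X Y).lapMatrix ℤ (Sum.inr y) (Sum.inl b)
          = (if b = X then -(if ∃ i, Y i = y then (1:ℤ) else 0) else 0) := by
        intro y
        simp only [Nm, Matrix.of_apply, Sum.elim_inr, if_pos rfl, one_mul, lap_apply,
          glue_adj_rl, ite_and]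
        split_ifs <;> simp_all
      rw [Finset.sum_congr rfl fun y _ => hs y]
      by_cases hb : b = X
      · subst hb
        simp only [eq_self_iff_true, if_true]
        rw [Finset.sum_neg_distrib, sum_indicator_mY Y]
        simp [Rm]
      · simp [hb, Rm]
    · have hs : ∀ y : V₂, Nm (V₂ := V₂) X (Sum.inr y) (Sum.inl X)
          * (glueGraph G₁ G₂ X Y).lapMatrix ℤ (Sum.inr y) (Sum.inr b)
          = (if y = b then ((glueGraph G₁ G₂ X Y).degree (Sum.inr y) : ℤ) else 0)
            - (if G₂.Adj y b then 1 else 0) := by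
        intro y
        simp only [Nm, Matrix.of_apply, Sum.elim_inr, if_pos rfl, one_mul, lap_apply,
          glue_adj_rr, Sum.inr.injEq]
        split_ifs <;> simp_all
      rw [Finset.sum_congr rfl fun y _ => hs y, Finset.sum_sub_distrib,
        Finset.sum_ite_eq' Finset.univ b
          (fun y => ((glueGraph G₁ G₂ X Y).degree (Sum.inr y) : ℤ))]
      have h2 : (∑ y : V₂, if G₂.Adj y b then (1:ℤ) else 0) = (G₂.degree b : ℤ) := by
        rw [SimpleGraph.degree_eq_sum_if_adj]
        exact Finset.sum_congr rfl fun y _ => if_congr (G₂.adj_comm y b) rfl rfl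
      rw [h2]
      simp [glue_degree_inr Y G₁ G₂ X b, Rm]
  · have hs : ∀ y : V₂, Nm (V₂ := V₂) X (Sum.inr y) i
        * (glueGraph G₁ G₂ X Y).lapMatrix ℤ (Sum.inr y) j = 0 := by
      intro y; simp [Nm, hi]
    rw [Finset.sum_congr rfl fun y _ => hs y]
    simp [Rm, hi]

def Dmat : Matrix (V₁ ⊕ V₂) (V₁ ⊕ V₂) ℤ :=
  Matrix.fromBlocks (G₁.lapMatrix ℤ) 0 0
    (G₂.lapMatrix ℤ + Matrix.diagonal fun y => if ∃ i, Y i = y then (1 : ℤ) else 0)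

lemma RN : Rm Y X * (Nm X : Matrix (V₁ ⊕ V₂) (V₁ ⊕ V₂) ℤ)
    = Matrix.of fun i j => if i = Sum.inl X ∧ j = Sum.inl X then (mY Y : ℤ) else 0 := by
  ext i j
  rw [Matrix.mul_apply, Fintype.sum_sum_type]
  have h0 : (∑ a : V₁, Rm Y X i (Sum.inl a) * Nm X (Sum.inl a) j) = 0 := by
    refine Finset.sum_eq_zero fun a _ => ?_; simp [Nm]
  rw [h0, zero_add]
  simp only [Nm, Rm, Matrix.of_apply, Sum.elim_inr]
  by_cases hi : i = Sum.inl X <;> by_cases hj : j = Sum.inl X <;>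
    simp [hi, hj, sum_indicator_mY Y]

lemma key : (1 + Nm X)ᵀ * (glueGraph G₁ G₂ X Y).lapMatrix ℤ * (1 + Nm X)
    = Dmat Y G₁ G₂ := by
  have hsym : ((glueGraph G₁ G₂ X Y).lapMatrix ℤ)ᵀ = (glueGraph G₁ G₂ X Y).lapMatrix ℤ :=
    (glueGraph G₁ G₂ X Y).isSymm_lapMatrix (R := ℤ)
  have hLN : (glueGraph G₁ G₂ X Y).lapMatrix ℤ * Nm X = (Rm Y X)ᵀ := by
    rw [← hsym, ← Matrix.transpose_transpose (Nm X), ← Matrix.transpose_mul,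
      NtL Y G₁ G₂ X]
  have expand : (1 + Nm X)ᵀ * (glueGraph G₁ G₂ X Y).lapMatrix ℤ * (1 + Nm X)
      = (glueGraph G₁ G₂ X Y).lapMatrix ℤ
        + (Nm X)ᵀ * (glueGraph G₁ G₂ X Y).lapMatrix ℤ
        + (glueGraph G₁ G₂ X Y).lapMatrix ℤ * Nm X
        + (Nm X)ᵀ * ((glueGraph G₁ G₂ X Y).lapMatrix ℤ * Nm X) := by
    rw [Matrix.transpose_add, Matrix.transpose_one]
    noncomm_ring
  rw [expand, NtL Y G₁ G₂ X, hLN]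
  have hRN : Rm Y X * (Nm X : Matrix (V₁ ⊕ V₂) (V₁ ⊕ V₂) ℤ)
      = Matrix.of fun i j => if i = Sum.inl X ∧ j = Sum.inl X then (mY Y : ℤ) else 0 :=
    RN Y X
  have hRtN : (Rm Y X : Matrix (V₁ ⊕ V₂) (V₁ ⊕ V₂) ℤ)ᵀ = (Rm Y X)ᵀ := rfl
  -- (Nm X)ᵀ * (Rm Y X)ᵀ = (Rm Y X * Nm X)ᵀ
  have h4 : (Nm X)ᵀ * ((Rm Y X)ᵀ : Matrix (V₁ ⊕ V₂) (V₁ ⊕ V₂) ℤ)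
      = (Rm Y X * Nm X)ᵀ := by rw [Matrix.transpose_mul]
  rw [h4, hRN]
  ext i j
  rcases i with a | a <;> rcases j with b | b
  · simp only [Matrix.add_apply, Matrix.transpose_apply, Matrix.of_apply, Rm,
      Sum.elim_inl, Dmat, Matrix.fromBlocks_apply₁₁, lap_apply, glue_adj_ll,
      glue_degree_inl Y G₁ G₂ X a, Sum.inl.injEq]
    by_cases ha : a = X <;> by_cases hb : b = X <;> by_cases hab : a = b <;>
      simp_all <;> ring
  · simp only [Matrix.add_apply, Matrix.transpose_apply, Matrix.of_apply, Rm,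
      Sum.elim_inr, Sum.elim_inl, Dmat, Matrix.fromBlocks_apply₁₂, lap_apply,
      glue_adj_lr]
    by_cases ha : a = X <;> by_cases hb : ∃ i, Y i = b <;> simp_all
  · simp only [Matrix.add_apply, Matrix.transpose_apply, Matrix.of_apply, Rm,
      Sum.elim_inr, Sum.elim_inl, Dmat, Matrix.fromBlocks_apply₂₁, lap_apply,
      glue_adj_rl]
    by_cases hb : b = X <;> by_cases ha : ∃ i, Y i = a <;> simp_all
  · simp only [Matrix.add_apply, Matrix.transpose_apply, Matrix.of_apply, Rm,
      Sum.elim_inr, Dmat, Matrix.fromBlocks_apply₂₂, lap_apply, glue_adj_rr,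
      glue_degree_inr Y G₁ G₂ X, Sum.inr.injEq, Matrix.diagonal_apply]
    by_cases hab : a = b <;> simp_all <;> ring

end Aux

/-- The equivalence class over `ℤ` of the quadratic form of the combinatorial Laplacian of
`G(X)` does not depend on the choice of the vertex `X` of `G₁`. -/
theorem stmt_6 {V₁ V₂ : Type*} [Fintype V₁] [Fintype V₂] [DecidableEq V₁] [DecidableEq V₂]
    (G₁ : SimpleGraph V₁) (G₂ : SimpleGraph V₂)
    [DecidableRel G₁.Adj] [DecidableRel G₂.Adj]
    {k : ℕ} (Y : Fin k → V₂) (X X' : V₁) :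
    ∃ T : Matrix (V₁ ⊕ V₂) (V₁ ⊕ V₂) ℤ, IsUnit T.det ∧
      Tᵀ * (glueGraph G₁ G₂ X Y).lapMatrix ℤ * T =
        (glueGraph G₁ G₂ X' Y).lapMatrix ℤ := by
  refine ⟨(1 + Nm X) * (1 - Nm X'), ?_, ?_⟩
  · have h1 : ((1 + Nm X) * (1 - Nm X') : Matrix (V₁ ⊕ V₂) (V₁ ⊕ V₂) ℤ)
        * ((1 + Nm X') * (1 - Nm X)) = 1 := by
      have e : ((1 + Nm X) * (1 - Nm X') : Matrix (V₁ ⊕ V₂) (V₁ ⊕ V₂) ℤ)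
          * ((1 + Nm X') * (1 - Nm X))
          = (1 + Nm X) * (((1 - Nm X') * (1 + Nm X')) * (1 - Nm X)) := by noncomm_ring
      have h2 : ((1 - Nm X') * (1 + Nm X') : Matrix (V₁ ⊕ V₂) (V₁ ⊕ V₂) ℤ) = 1 := by
        have e2 : ((1 - Nm X') * (1 + Nm X') : Matrix (V₁ ⊕ V₂) (V₁ ⊕ V₂) ℤ)
            = 1 - Nm X' * Nm X' := by noncomm_ring
        rw [e2, Nm_mul_Nm, sub_zero]
      rw [e, h2, one_mul, one_add_Nm_mul]
    exact Matrix.isUnit_det_of_right_inverse h1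
  · have hX := key Y G₁ G₂ X
    have hX' := key Y G₁ G₂ X'
    have h2 : ((1 - Nm X')ᵀ : Matrix (V₁ ⊕ V₂) (V₁ ⊕ V₂) ℤ)
        * ((1 + Nm X')ᵀ * (glueGraph G₁ G₂ X' Y).lapMatrix ℤ * (1 + Nm X'))
        * (1 - Nm X') = (glueGraph G₁ G₂ X' Y).lapMatrix ℤ := by
      have hinv : ((1 + Nm X') * (1 - Nm X') : Matrix (V₁ ⊕ V₂) (V₁ ⊕ V₂) ℤ) = 1 :=
        one_add_Nm_mul X'
      calc ((1 - Nm X')ᵀ : Matrix (V₁ ⊕ V₂) (V₁ ⊕ V₂) ℤ)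
          * ((1 + Nm X')ᵀ * (glueGraph G₁ G₂ X' Y).lapMatrix ℤ * (1 + Nm X'))
          * (1 - Nm X')
          = ((1 + Nm X') * (1 - Nm X'))ᵀ * (glueGraph G₁ G₂ X' Y).lapMatrix ℤ
            * ((1 + Nm X') * (1 - Nm X')) := by
            rw [Matrix.transpose_mul]; noncomm_ring
        _ = (glueGraph G₁ G₂ X' Y).lapMatrix ℤ := by
            rw [hinv, Matrix.transpose_one, one_mul, mul_one]
    calc ((1 + Nm X) * (1 - Nm X'))ᵀ * (glueGraph G₁ G₂ X Y).lapMatrix ℤ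
          * ((1 + Nm X) * (1 - Nm X'))
        = (1 - Nm X')ᵀ * ((1 + Nm X)ᵀ * (glueGraph G₁ G₂ X Y).lapMatrix ℤ * (1 + Nm X))
          * (1 - Nm X') := by rw [Matrix.transpose_mul]; noncomm_ring
      _ = (1 - Nm X')ᵀ * ((1 + Nm X')ᵀ * (glueGraph G₁ G₂ X' Y).lapMatrix ℤ * (1 + Nm X'))
          * (1 - Nm X') := by rw [hX, hX']
      _ = (glueGraph G₁ G₂ X' Y).lapMatrix ℤ := h2
end

section
/- Define the wedge sum G₁ ∨_{X,Y} G₂ of two connected graphs G₁, G₂ with respect to a vertex X of G₁ and a vertex Y of G₂ as the quotient of their disjoint union identifying X with Y. Then the equivalence class over ℤ of the quadratic form of the combinatorial Laplacian of G₁ ∨_{X,Y} G₂ is independent of the choices of X and Y. -/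
open Matrix

/-- The wedge sum `G₁ ∨_{X,Y} G₂`: the quotient of the disjoint union of `G₁` and `G₂`
identifying the vertex `X` of `G₁` with the vertex `Y` of `G₂` (modelled on the vertex set
`V₁ ⊕ {v : V₂ // v ≠ Y}`, with `X` playing the role of the identified vertex). -/
def wedgeGraph {V₁ V₂ : Type*} (G₁ : SimpleGraph V₁) (G₂ : SimpleGraph V₂)
    (X : V₁) (Y : V₂) : SimpleGraph (V₁ ⊕ {v : V₂ // v ≠ Y}) where
  Adj v w :=
    match v, w with
    | Sum.inl a, Sum.inl b => G₁.Adj a b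
    | Sum.inr a, Sum.inr b => G₂.Adj a b
    | Sum.inl a, Sum.inr b => a = X ∧ G₂.Adj Y b
    | Sum.inr a, Sum.inl b => b = X ∧ G₂.Adj Y a
  symm := by
    constructor
    rintro (a | a) (b | b) h
    · exact G₁.adj_symm h
    · exact h
    · exact h
    · exact G₂.adj_symm h
  loopless := by
    constructor
    rintro (a | a) h
    · exact G₁.loopless.irrefl a h
    · exact G₂.loopless.irrefl a.1 h

instance wedgeGraph.adjDecidable {V₁ V₂ : Type*} [DecidableEq V₁] [DecidableEq V₂]
    (G₁ : SimpleGraph V₁) (G₂ : SimpleGraph V₂) (X : V₁) (Y : V₂)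
    [DecidableRel G₁.Adj] [DecidableRel G₂.Adj] :
    DecidableRel (wedgeGraph G₁ G₂ X Y).Adj := fun v w =>
  match v, w with
  | Sum.inl a, Sum.inl b => inferInstanceAs (Decidable (G₁.Adj a b))
  | Sum.inr a, Sum.inr b => inferInstanceAs (Decidable (G₂.Adj a.1 b.1))
  | Sum.inl a, Sum.inr b => inferInstanceAs (Decidable (a = X ∧ G₂.Adj Y b.1))
  | Sum.inr a, Sum.inl b => inferInstanceAs (Decidable (b = X ∧ G₂.Adj Y a.1))

/-! ### Auxiliary lemmas -/

section Aux

variable {V : Type*} [Fintype V] [DecidableEq V]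

/-- The quadratic/bilinear "energy" sum of a graph. -/
def gsum (G : SimpleGraph V) [DecidableRel G.Adj] (a : V → ℤ) : ℤ :=
  ∑ i, ∑ j, if G.Adj i j then a i * (a i - a j) else 0

lemma quad_lap (G : SimpleGraph V) [DecidableRel G.Adj] (x y : V → ℤ) :
    x ⬝ᵥ (G.lapMatrix ℤ *ᵥ y) = ∑ i, ∑ j, if G.Adj i j then x i * (y i - y j) else 0 := by
  unfold dotProduct
  refine Finset.sum_congr rfl fun i _ => ?_
  rw [SimpleGraph.lapMatrix_mulVec_apply]
  have h1 : ∑ j, (if G.Adj i j then x i * (y i - y j) else 0)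
      = ∑ u ∈ G.neighborFinset i, x i * (y i - y u) := by
    rw [← Finset.sum_filter]
    congr 1
    ext u
    simp [SimpleGraph.mem_neighborFinset]
  rw [h1, SimpleGraph.degree, Finset.card_eq_sum_ones]
  push_cast
  rw [Finset.sum_mul, mul_sub, Finset.mul_sum, Finset.mul_sum, ← Finset.sum_sub_distrib]
  exact Finset.sum_congr rfl fun u _ => by ring

lemma quad_lap' (G : SimpleGraph V) [DecidableRel G.Adj] (x : V → ℤ) :
    x ⬝ᵥ (G.lapMatrix ℤ *ᵥ x) = gsum G x :=
  quad_lap G x x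

omit [DecidableEq V] in
lemma sum_adj_antisym (G : SimpleGraph V) [DecidableRel G.Adj] (a : V → ℤ) :
    ∑ i, ∑ j, (if G.Adj i j then a i - a j else 0) = 0 := by
  have h : ∑ i, ∑ j, (if G.Adj i j then a i - a j else 0)
      = - ∑ i, ∑ j, (if G.Adj i j then a i - a j else 0) := by
    conv_lhs => rw [Finset.sum_comm]
    rw [← Finset.sum_neg_distrib]
    refine Finset.sum_congr rfl fun i _ => ?_
    rw [← Finset.sum_neg_distrib]
    refine Finset.sum_congr rfl fun j _ => ?_
    by_cases hadj : G.Adj i j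
    · have hadj' : G.Adj j i := hadj.symm
      simp only [hadj, hadj', if_true]
      ring
    · have hadj' : ¬ G.Adj j i := fun h => hadj h.symm
      simp [hadj, hadj']
  linarith

omit [DecidableEq V] in
lemma gsum_shift (G : SimpleGraph V) [DecidableRel G.Adj] (a : V → ℤ) (c : ℤ) :
    gsum G (fun v => a v + c) = gsum G a := by
  unfold gsum
  have h := sum_adj_antisym G a
  calc ∑ i, ∑ j, (if G.Adj i j then (a i + c) * (a i + c - (a j + c)) else 0)
      = ∑ i, ∑ j, ((if G.Adj i j then a i * (a i - a j) else 0)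
        + c * (if G.Adj i j then a i - a j else 0)) := by
        refine Finset.sum_congr rfl fun i _ => Finset.sum_congr rfl fun j _ => ?_
        by_cases hadj : G.Adj i j <;> simp [hadj] <;> ring
    _ = gsum G a := by
        simp only [Finset.sum_add_distrib, ← Finset.mul_sum]
        rw [h, mul_zero, add_zero]
        rfl

lemma eq_of_quad {n : Type*} [Fintype n] [DecidableEq n] (A B : Matrix n n ℤ)
    (hA : A.IsSymm) (hB : B.IsSymm)
    (h : ∀ x : n → ℤ, x ⬝ᵥ (A *ᵥ x) = x ⬝ᵥ (B *ᵥ x)) : A = B := by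
  have hd : ∀ i, A i i = B i i := by
    intro i
    have := h (Pi.single i 1)
    simpa [mulVec_single, dotProduct_single] using this
  ext i j
  rcases eq_or_ne i j with rfl | hij
  · exact hd i
  · have := h (Pi.single i 1 + Pi.single j 1)
    simp only [mulVec_add, mulVec_single, dotProduct_add, add_dotProduct,
      single_dotProduct, one_mul, mul_one, Pi.add_apply, Pi.smul_apply, MulOpposite.op_one,
        one_smul, col_apply] at this
    have hAij : A j i = A i j := by
      have := congrFun (congrFun hA.symm i) j; simpa [transpose_apply] using this.symm
    have hBij : B j i = B i j := by
      have := congrFun (congrFun hB.symm i) j; simpa [transpose_apply] using this.symm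
    have d1 := hd i; have d2 := hd j
    omega

lemma sum_split {V₂ : Type*} [Fintype V₂] [DecidableEq V₂] (Y : V₂) (f : V₂ → ℤ) :
    ∑ v, f v = f Y + ∑ s : {v : V₂ // v ≠ Y}, f s.1 := by
  rw [← Finset.add_sum_erase _ f (Finset.mem_univ Y)]
  congr 1
  exact Finset.sum_subtype _ (by simp [Finset.mem_erase]) f

end Aux

section Wedge

variable {V₁ V₂ : Type*}

@[simp] lemma wedge_adj_ll (G₁ : SimpleGraph V₁) (G₂ : SimpleGraph V₂) (X : V₁) (Y : V₂)
    (a b : V₁) :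
    (wedgeGraph G₁ G₂ X Y).Adj (Sum.inl a) (Sum.inl b) ↔ G₁.Adj a b := Iff.rfl
@[simp] lemma wedge_adj_rr (G₁ : SimpleGraph V₁) (G₂ : SimpleGraph V₂) (X : V₁) (Y : V₂)
    (a b : {v : V₂ // v ≠ Y}) :
    (wedgeGraph G₁ G₂ X Y).Adj (Sum.inr a) (Sum.inr b) ↔ G₂.Adj a.1 b.1 := Iff.rfl
@[simp] lemma wedge_adj_lr (G₁ : SimpleGraph V₁) (G₂ : SimpleGraph V₂) (X : V₁) (Y : V₂)
    (a : V₁) (b : {v : V₂ // v ≠ Y}) :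
    (wedgeGraph G₁ G₂ X Y).Adj (Sum.inl a) (Sum.inr b) ↔ a = X ∧ G₂.Adj Y b.1 := Iff.rfl
@[simp] lemma wedge_adj_rl (G₁ : SimpleGraph V₁) (G₂ : SimpleGraph V₂) (X : V₁) (Y : V₂)
    (a : {v : V₂ // v ≠ Y}) (b : V₁) :
    (wedgeGraph G₁ G₂ X Y).Adj (Sum.inr a) (Sum.inl b) ↔ b = X ∧ G₂.Adj Y a.1 := Iff.rfl

/-- Extend a vector on the wedge vertex set to `V₂`, using the value at the glue point. -/
def wext [DecidableEq V₂] (X : V₁) (Y : V₂) (z : V₁ ⊕ {v : V₂ // v ≠ Y} → ℤ) (v : V₂) : ℤ :=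
  if h : v = Y then z (Sum.inl X) else z (Sum.inr ⟨v, h⟩)

lemma wext_Y [DecidableEq V₂] (X : V₁) (Y : V₂) (z : V₁ ⊕ {v : V₂ // v ≠ Y} → ℤ) :
    wext X Y z Y = z (Sum.inl X) := by simp [wext]

lemma wext_ne [DecidableEq V₂] (X : V₁) (Y : V₂) (z : V₁ ⊕ {v : V₂ // v ≠ Y} → ℤ)
    (s : {v : V₂ // v ≠ Y}) : wext X Y z s.1 = z (Sum.inr s) := by
  simp [wext, s.2]

variable [Fintype V₁] [Fintype V₂] [DecidableEq V₁] [DecidableEq V₂]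

lemma wedge_quad (G₁ : SimpleGraph V₁) (G₂ : SimpleGraph V₂)
    [DecidableRel G₁.Adj] [DecidableRel G₂.Adj]
    (X : V₁) (Y : V₂) (z : V₁ ⊕ {v : V₂ // v ≠ Y} → ℤ) :
    gsum (wedgeGraph G₁ G₂ X Y) z
      = gsum G₁ (fun v => z (Sum.inl v)) + gsum G₂ (wext X Y z) := by
  classical
  have hY := wext_Y X Y z
  have hs := wext_ne X Y z
  have hrhs : gsum G₂ (wext X Y z)
      = (∑ s : {v : V₂ // v ≠ Y}, if G₂.Adj Y s.1 then z (Sum.inl X) * (z (Sum.inl X) - z (Sum.inr s)) else 0)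
        + ((∑ t : {v : V₂ // v ≠ Y}, if G₂.Adj t.1 Y then z (Sum.inr t) * (z (Sum.inr t) - z (Sum.inl X)) else 0)
          + ∑ t : {v : V₂ // v ≠ Y}, ∑ s : {v : V₂ // v ≠ Y},
              if G₂.Adj t.1 s.1 then z (Sum.inr t) * (z (Sum.inr t) - z (Sum.inr s)) else 0) := by
    unfold gsum
    rw [sum_split Y (fun u => ∑ v, if G₂.Adj u v then wext X Y z u * (wext X Y z u - wext X Y z v) else 0)]
    congr 1
    · rw [sum_split Y (fun v => if G₂.Adj Y v then wext X Y z Y * (wext X Y z Y - wext X Y z v) else 0)]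
      simp only [G₂.irrefl, if_false, zero_add]
      refine Finset.sum_congr rfl fun s _ => ?_
      rw [hY, hs s]
    · refine Eq.trans (Finset.sum_congr rfl fun t _ => sum_split Y
        (fun v => if G₂.Adj t.1 v then wext X Y z t.1 * (wext X Y z t.1 - wext X Y z v) else 0)) ?_
      rw [Finset.sum_add_distrib]
      congr 1
      · refine Finset.sum_congr rfl fun t _ => ?_
        rw [hY, hs t]
      · refine Finset.sum_congr rfl fun t _ => Finset.sum_congr rfl fun s _ => ?_
        rw [hs t, hs s]
  rw [hrhs]
  unfold gsum
  rw [Fintype.sum_sum_type]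
  simp only [Fintype.sum_sum_type]
  simp only [wedge_adj_ll, wedge_adj_lr, wedge_adj_rl, wedge_adj_rr]
  rw [Finset.sum_add_distrib, Finset.sum_add_distrib]
  have e12 : (∑ x : V₁, ∑ s : {v : V₂ // v ≠ Y},
        if x = X ∧ G₂.Adj Y s.1 then z (Sum.inl x) * (z (Sum.inl x) - z (Sum.inr s)) else 0)
      = ∑ s : {v : V₂ // v ≠ Y},
        if G₂.Adj Y s.1 then z (Sum.inl X) * (z (Sum.inl X) - z (Sum.inr s)) else 0 := by
    rw [Finset.sum_comm]
    refine Finset.sum_congr rfl fun s _ => ?_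
    have h1 : ∀ x : V₁, (if x = X ∧ G₂.Adj Y s.1 then z (Sum.inl x) * (z (Sum.inl x) - z (Sum.inr s)) else 0)
        = if x = X then (if G₂.Adj Y s.1 then z (Sum.inl x) * (z (Sum.inl x) - z (Sum.inr s)) else 0) else 0 := by
      intro x; by_cases hx : x = X <;> simp [hx]
    simp only [h1]
    rw [Finset.sum_ite_eq' Finset.univ X
      (fun x => if G₂.Adj Y s.1 then z (Sum.inl x) * (z (Sum.inl x) - z (Sum.inr s)) else 0)]
    simp
  have e21 : (∑ t : {v : V₂ // v ≠ Y}, ∑ x : V₁,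
        if x = X ∧ G₂.Adj Y t.1 then z (Sum.inr t) * (z (Sum.inr t) - z (Sum.inl x)) else 0)
      = ∑ t : {v : V₂ // v ≠ Y},
        if G₂.Adj t.1 Y then z (Sum.inr t) * (z (Sum.inr t) - z (Sum.inl X)) else 0 := by
    refine Finset.sum_congr rfl fun t _ => ?_
    have h1 : ∀ x : V₁, (if x = X ∧ G₂.Adj Y t.1 then z (Sum.inr t) * (z (Sum.inr t) - z (Sum.inl x)) else 0)
        = if x = X then (if G₂.Adj Y t.1 then z (Sum.inr t) * (z (Sum.inr t) - z (Sum.inl x)) else 0) else 0 := by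
      intro x; by_cases hx : x = X <;> simp [hx]
    simp only [h1]
    rw [Finset.sum_ite_eq' Finset.univ X
      (fun x => if G₂.Adj Y t.1 then z (Sum.inr t) * (z (Sum.inr t) - z (Sum.inl x)) else 0)]
    simp [G₂.adj_comm Y t.1]
  rw [e12, e21]
  ring

/-- The basepoint-change map on functions. -/
def fmap [DecidableEq V₂] (X X' : V₁) (Y Y' : V₂)
    (x : V₁ ⊕ {v : V₂ // v ≠ Y'} → ℤ) : V₁ ⊕ {v : V₂ // v ≠ Y} → ℤ :=
  Sum.elim (fun v => x (Sum.inl v))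
    (fun s => wext X' Y' x s.1 + x (Sum.inl X) - wext X' Y' x Y)

lemma wext_fmap (X X' : V₁) (Y Y' : V₂) (x : V₁ ⊕ {v : V₂ // v ≠ Y'} → ℤ) (v : V₂) :
    wext X Y (fmap X X' Y Y' x) v
      = wext X' Y' x v + x (Sum.inl X) - wext X' Y' x Y := by
  by_cases h : v = Y
  · subst h
    rw [wext_Y]
    show x (Sum.inl X) = wext X' Y' x v + x (Sum.inl X) - wext X' Y' x v
    ring
  · exact wext_ne X Y (fmap X X' Y Y' x) ⟨v, h⟩

lemma fmap_fmap (X X' : V₁) (Y Y' : V₂) (x : V₁ ⊕ {v : V₂ // v ≠ Y'} → ℤ) :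
    fmap X' X Y' Y (fmap X X' Y Y' x) = x := by
  funext w
  cases w with
  | inl v => rfl
  | inr s =>
    show wext X Y (fmap X X' Y Y' x) s.1 + (fmap X X' Y Y' x) (Sum.inl X') - wext X Y (fmap X X' Y Y' x) Y'
        = x (Sum.inr s)
    rw [wext_fmap, wext_fmap]
    show _ + x (Sum.inl X') - _ = _
    have h1 : wext X' Y' x Y' = x (Sum.inl X') := wext_Y X' Y' x
    have h2 : wext X' Y' x s.1 = x (Sum.inr s) := wext_ne X' Y' x s
    rw [h1, h2]
    ring

lemma fmap_add (X X' : V₁) (Y Y' : V₂) (x y : V₁ ⊕ {v : V₂ // v ≠ Y'} → ℤ) :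
    fmap X X' Y Y' (x + y) = fmap X X' Y Y' x + fmap X X' Y Y' y := by
  funext w
  cases w with
  | inl v => simp [fmap]
  | inr s =>
    show wext X' Y' (x + y) s.1 + (x + y) (Sum.inl X) - wext X' Y' (x + y) Y = _
    have hadd : ∀ v, wext X' Y' (x + y) v = wext X' Y' x v + wext X' Y' y v := by
      intro v; unfold wext; split <;> simp
    rw [hadd, hadd]
    show _ = (wext X' Y' x s.1 + x (Sum.inl X) - wext X' Y' x Y)
        + (wext X' Y' y s.1 + y (Sum.inl X) - wext X' Y' y Y)
    simp only [Pi.add_apply]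
    ring

lemma fmap_smul (X X' : V₁) (Y Y' : V₂) (c : ℤ) (x : V₁ ⊕ {v : V₂ // v ≠ Y'} → ℤ) :
    fmap X X' Y Y' (c • x) = c • fmap X X' Y Y' x := by
  funext w
  cases w with
  | inl v => simp [fmap]
  | inr s =>
    show wext X' Y' (c • x) s.1 + (c • x) (Sum.inl X) - wext X' Y' (c • x) Y = _
    have hsm : ∀ v, wext X' Y' (c • x) v = c * wext X' Y' x v := by
      intro v; unfold wext; split <;> simp
    rw [hsm, hsm]
    show _ = c • (wext X' Y' x s.1 + x (Sum.inl X) - wext X' Y' x Y)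
    simp only [Pi.smul_apply, smul_eq_mul]
    ring

end Wedge

/-- The equivalence class over `ℤ` of the quadratic form of the combinatorial Laplacian of
the wedge sum `G₁ ∨_{X,Y} G₂` is independent of the choices of `X` and `Y`. -/
theorem stmt_8 {V₁ V₂ : Type*} [Fintype V₁] [Fintype V₂] [DecidableEq V₁] [DecidableEq V₂]
    (G₁ : SimpleGraph V₁) (G₂ : SimpleGraph V₂)
    [DecidableRel G₁.Adj] [DecidableRel G₂.Adj]
    (hc₁ : G₁.Connected) (hc₂ : G₂.Connected)
    (X X' : V₁) (Y Y' : V₂) :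
    ∃ e : (V₁ ⊕ {v : V₂ // v ≠ Y}) ≃ (V₁ ⊕ {v : V₂ // v ≠ Y'}),
      ∃ T : Matrix (V₁ ⊕ {v : V₂ // v ≠ Y'}) (V₁ ⊕ {v : V₂ // v ≠ Y'}) ℤ,
        IsUnit T.det ∧
        Tᵀ * (Matrix.reindex e e ((wedgeGraph G₁ G₂ X Y).lapMatrix ℤ)) * T =
          (wedgeGraph G₁ G₂ X' Y').lapMatrix ℤ := by
  classical
  -- the vertex bijection
  have hσ : ∀ v : V₂, v ≠ Y ↔ Equiv.swap Y Y' v ≠ Y' := by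
    intro v
    constructor
    · intro h he
      apply h
      refine (Equiv.swap Y Y').injective ?_
      rw [he, Equiv.swap_apply_left]
    · intro h he
      subst he
      exact h (Equiv.swap_apply_left _ _)
  let σ : {v : V₂ // v ≠ Y} ≃ {v : V₂ // v ≠ Y'} :=
    (Equiv.swap Y Y').subtypeEquiv hσ
  let e : (V₁ ⊕ {v : V₂ // v ≠ Y}) ≃ (V₁ ⊕ {v : V₂ // v ≠ Y'}) :=
    Equiv.sumCongr (Equiv.refl V₁) σ
  refine ⟨e, ?_⟩
  -- the change-of-basis linear maps
  let φ : ((V₁ ⊕ {v : V₂ // v ≠ Y'}) → ℤ) →ₗ[ℤ] ((V₁ ⊕ {v : V₂ // v ≠ Y'}) → ℤ) :=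
    { toFun := fun x => fmap X X' Y Y' x ∘ ⇑e.symm
      map_add' := fun x y => by
        funext w
        show fmap X X' Y Y' (x + y) (e.symm w) = _
        rw [fmap_add]
        rfl
      map_smul' := fun c x => by
        funext w
        show fmap X X' Y Y' (c • x) (e.symm w) = _
        rw [fmap_smul]
        rfl }
  let ψ : ((V₁ ⊕ {v : V₂ // v ≠ Y'}) → ℤ) →ₗ[ℤ] ((V₁ ⊕ {v : V₂ // v ≠ Y'}) → ℤ) :=
    { toFun := fun u => fmap X' X Y' Y (u ∘ ⇑e)
      map_add' := fun x y => by
        show fmap X' X Y' Y ((x + y) ∘ ⇑e) = _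
        have h : (x + y) ∘ ⇑e = x ∘ ⇑e + y ∘ ⇑e := rfl
        rw [h, fmap_add]
      map_smul' := fun c x => by
        show fmap X' X Y' Y ((c • x) ∘ ⇑e) = _
        have h : (c • x) ∘ ⇑e = c • (x ∘ ⇑e) := rfl
        rw [h, fmap_smul]
        rfl }
  have hφψ : φ.comp ψ = LinearMap.id := by
    apply LinearMap.ext
    intro u
    show fmap X X' Y Y' (fmap X' X Y' Y (u ∘ ⇑e)) ∘ ⇑e.symm = u
    rw [fmap_fmap]
    funext w
    simp
  refine ⟨LinearMap.toMatrix' φ, ?_, ?_⟩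
  · refine isUnit_of_mul_isUnit_left (y := (LinearMap.toMatrix' ψ).det) ?_
    rw [← Matrix.det_mul, ← LinearMap.toMatrix'_comp, hφψ, LinearMap.toMatrix'_id,
      Matrix.det_one]
    exact isUnit_one
  · set T := LinearMap.toMatrix' φ with hT
    set M := Matrix.reindex e e ((wedgeGraph G₁ G₂ X Y).lapMatrix ℤ) with hM
    have hMsymm : M.IsSymm := by
      rw [Matrix.IsSymm, hM, Matrix.transpose_reindex,
        ((wedgeGraph G₁ G₂ X Y).isSymm_lapMatrix ℤ)]
    have hLsymm : ((wedgeGraph G₁ G₂ X' Y').lapMatrix ℤ).IsSymm :=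
      (wedgeGraph G₁ G₂ X' Y').isSymm_lapMatrix ℤ
    apply eq_of_quad
    · rw [Matrix.IsSymm, Matrix.transpose_mul, Matrix.transpose_mul,
        Matrix.transpose_transpose, hMsymm, Matrix.mul_assoc]
    · exact hLsymm
    · intro x
      have hTx : T *ᵥ x = fmap X X' Y Y' x ∘ ⇑e.symm := by
        rw [hT, ← Matrix.toLin'_apply, Matrix.toLin'_toMatrix']
        rfl
      have step1 : x ⬝ᵥ ((Tᵀ * M * T) *ᵥ x) = (T *ᵥ x) ⬝ᵥ (M *ᵥ (T *ᵥ x)) := by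
        rw [← Matrix.mulVec_mulVec, ← Matrix.mulVec_mulVec,
          Matrix.dotProduct_mulVec x Tᵀ, Matrix.vecMul_transpose]
      rw [step1, hTx]
      have hcomp : (fmap X X' Y Y' x ∘ ⇑e.symm) ∘ ⇑e = fmap X X' Y Y' x := by
        funext w
        show fmap X X' Y Y' x (e.symm (e w)) = fmap X X' Y Y' x w
        rw [Equiv.symm_apply_apply]
      have step2 : (fmap X X' Y Y' x ∘ ⇑e.symm) ⬝ᵥ (M *ᵥ (fmap X X' Y Y' x ∘ ⇑e.symm))
          = (fmap X X' Y Y' x) ⬝ᵥ ((wedgeGraph G₁ G₂ X Y).lapMatrix ℤ *ᵥ (fmap X X' Y Y' x)) := by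
        rw [hM, Matrix.reindex_apply, Matrix.submatrix_mulVec_equiv, Equiv.symm_symm, hcomp]
        unfold dotProduct
        exact Equiv.sum_comp e.symm (fun w => fmap X X' Y Y' x w *
          ((wedgeGraph G₁ G₂ X Y).lapMatrix ℤ *ᵥ fmap X X' Y Y' x) w)
      rw [step2, quad_lap', quad_lap', wedge_quad, wedge_quad]
      have h1 : (fun v => fmap X X' Y Y' x (Sum.inl v)) = (fun v => x (Sum.inl v)) := rfl
      rw [h1]
      congr 1
      have h2 : wext X Y (fmap X X' Y Y' x)
          = fun v => wext X' Y' x v + (x (Sum.inl X) - wext X' Y' x Y) := by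
        funext v
        rw [wext_fmap]
        ring
      rw [h2, gsum_shift]
end

section
/- Any two trees with the same number n of vertices have combinatorial Laplacians that represent equivalent quadratic forms over ℤ; that is, if T₁ and T₂ are trees on n vertices with Laplacians L₁, L₂, there exists P ∈ GL(n,ℤ) with PᵀL₁P = L₂. -/
open Matrix

namespace TreeLapAux

open Finset SimpleGraph

variable {V : Type} [Fintype V] [DecidableEq V]

lemma lap_apply (T : SimpleGraph V) [DecidableRel T.Adj] (x y : V) :
    T.lapMatrix ℤ x y =
      (if x = y then (T.degree x : ℤ) else 0) - (if T.Adj x y then 1 else 0) := by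
  simp [SimpleGraph.lapMatrix, SimpleGraph.degMatrix, Matrix.diagonal_apply, Matrix.sub_apply]

/-- Every vertex of a connected graph on at least two vertices has positive degree. -/
lemma degree_pos (T : SimpleGraph V) [DecidableRel T.Adj] (hT : T.Connected)
    (h2 : 2 ≤ Fintype.card V) (v : V) : 0 < T.degree v := by
  obtain ⟨w, hw⟩ := Fintype.exists_ne_of_one_lt_card (by omega) v
  obtain ⟨p⟩ := hT.preconnected v w
  rw [T.degree_pos_iff_exists_adj]
  cases p with
  | nil => exact absurd rfl hw.symm
  | cons h q => exact ⟨_, h⟩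

/-- A tree on at least two vertices has a leaf. -/
lemma exists_leaf (T : SimpleGraph V) [DecidableRel T.Adj] (hT : T.IsTree)
    (h2 : 2 ≤ Fintype.card V) : ∃ u, T.degree u = 1 := by
  by_contra h
  push_neg at h
  have hge : ∀ v, 2 ≤ T.degree v := by
    intro v
    have := degree_pos T hT.isConnected h2 v
    have := h v
    omega
  have hsum : ∑ v, T.degree v = 2 * T.edgeFinset.card :=
    T.sum_degrees_eq_twice_card_edges
  have hc := hT.card_edgeFinset
  have : ∑ v, T.degree v ≥ ∑ _v : V, 2 := Finset.sum_le_sum fun i _ => hge i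
  simp only [Finset.sum_const, Finset.card_univ, smul_eq_mul] at this
  omega

end TreeLapAux


namespace TreeLapAux

open Finset SimpleGraph SimpleGraph.Walk

variable {V : Type} [Fintype V] [DecidableEq V]

/-- The graph obtained by deleting a vertex. -/
def del (T : SimpleGraph V) (u : V) : SimpleGraph {x : V // x ≠ u} :=
  T.comap (↑)

instance (T : SimpleGraph V) [DecidableRel T.Adj] (u : V) :
    DecidableRel (del T u).Adj := fun a b =>
  inferInstanceAs (Decidable (T.Adj a b))

lemma del_adj (T : SimpleGraph V) (u : V) (a b : {x : V // x ≠ u}) :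
    (del T u).Adj a b ↔ T.Adj ↑a ↑b := Iff.rfl

lemma del_degree (T : SimpleGraph V) [DecidableRel T.Adj] (u : V)
    (x : {x : V // x ≠ u}) :
    ((del T u).degree x : ℤ) = T.degree ↑x - (if T.Adj ↑x u then 1 else 0) := by
  rw [SimpleGraph.degree_eq_sum_if_adj, SimpleGraph.degree_eq_sum_if_adj]
  have h1 : ∑ j : {x : V // x ≠ u}, (if (del T u).Adj x j then (1:ℤ) else 0)
      = ∑ j ∈ Finset.univ.erase u, (if T.Adj ↑x j then (1:ℤ) else 0) := by
    rw [Finset.sum_subtype (Finset.univ.erase u)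
      (p := fun y => y ≠ u) (by simp) (fun j => if T.Adj ↑x j then (1:ℤ) else 0)]
    exact Finset.sum_congr rfl fun j _ => by simp [del_adj]
  rw [h1, ← Finset.sum_erase_add _ _ (Finset.mem_univ u)]
  ring

lemma not_mem_path_support (T : SimpleGraph V) {u w : V} (huw : T.Adj u w)
    (huniq : ∀ x, T.Adj u x → x = w) {a b : V} (ha : a ≠ u) (hb : b ≠ u)
    (p : T.Walk a b) (hp : p.IsPath) : u ∉ p.support := by
  intro hu
  have hq := p.take_spec hu
  obtain ⟨x, hx, r', hr'⟩ := (p.dropUntil u hu).exists_eq_cons_of_ne (Ne.symm hb)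
  obtain ⟨y, hy, q', hq'⟩ := (p.takeUntil u hu).reverse.exists_eq_cons_of_ne (Ne.symm ha)
  have hxw : x = w := huniq x hx
  have hyw : y = w := huniq y hy
  have hwq : y ∈ (p.takeUntil u hu).support := by
    rw [← List.mem_reverse, ← Walk.support_reverse, hq', Walk.support_cons]
    exact List.mem_cons_of_mem _ q'.start_mem_support
  have hwr : x ∈ (p.dropUntil u hu).support.tail := by
    rw [hr', Walk.support_cons]
    exact r'.start_mem_support
  have hnd : p.support.Nodup := hp.support_nodup
  rw [← hq, Walk.support_append] at hnd
  obtain ⟨-, -, hdisj⟩ := List.nodup_append'.mp hnd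
  exact hdisj (hyw ▸ hwq) (hxw ▸ hwr)

lemma reach_del (T : SimpleGraph V) {u : V} : ∀ {a b : V} (p : T.Walk a b)
    (_ : u ∉ p.support) (ha : a ≠ u) (hb : b ≠ u),
    (del T u).Reachable ⟨a, ha⟩ ⟨b, hb⟩ := by
  intro a b p
  induction p with
  | nil => intro _ _ _; exact Reachable.refl _
  | @cons a c b h q ih =>
      intro hu ha hb
      have hc : c ≠ u := fun hcu => hu (by
        rw [Walk.support_cons]
        exact List.mem_cons_of_mem _ (hcu ▸ q.start_mem_support))
      have h1 : (del T u).Adj ⟨a, ha⟩ ⟨c, hc⟩ := h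
      exact h1.reachable.trans (ih (fun hq => hu (by
        rw [Walk.support_cons]; exact List.mem_cons_of_mem _ hq)) hc hb)

lemma del_isTree (T : SimpleGraph V) {u w : V} (hT : T.IsTree) (huw : T.Adj u w)
    (huniq : ∀ x, T.Adj u x → x = w) : (del T u).IsTree := by
  haveI : Nonempty {x : V // x ≠ u} := ⟨⟨w, huw.ne'⟩⟩
  refine ⟨⟨fun a b => ?_⟩, fun v c hc => ?_⟩
  · obtain ⟨p, hp, -⟩ := hT.existsUnique_path ↑a ↑b
    exact reach_del T p (not_mem_path_support T huw huniq a.2 b.2 p hp) a.2 b.2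
  · exact hT.IsAcyclic (c.map (SimpleGraph.Hom.comap Subtype.val T))
      (hc.map (fun _ _ h => Subtype.val_injective h))

end TreeLapAux

namespace TreeLapAux

open Finset SimpleGraph

variable {V : Type} [Fintype V] [DecidableEq V]

lemma transpose_transvection (u w : V) :
    (Matrix.transvection u w (1:ℤ))ᵀ = Matrix.transvection w u 1 := by
  ext i j
  simp [Matrix.transvection, Matrix.transpose_apply, Matrix.one_apply,
    Matrix.single, Matrix.add_apply, eq_comm, and_comm]

lemma del_lap_apply (T : SimpleGraph V) [DecidableRel T.Adj] {u w : V}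
    (huw : T.Adj u w) (huniq : ∀ x, T.Adj u x → x = w) (a b : {x : V // x ≠ u}) :
    (del T u).lapMatrix ℤ a b
      = T.lapMatrix ℤ ↑a ↑b - (if a = b ∧ (↑a : V) = w then 1 else 0) := by
  have hadj : (T.Adj ↑a u) = ((↑a : V) = w) :=
    propext ⟨fun h => huniq _ h.symm, fun h => h ▸ huw.symm⟩
  rcases eq_or_ne a b with rfl | h
  · have hA : ((del T u).Adj a a) = (T.Adj (↑a : V) ↑a) := propext (del_adj T u a a)
    rw [lap_apply, lap_apply, del_degree]
    simp only [hA, hadj, if_pos rfl, true_and]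
    split_ifs <;> ring
  · have h' : ¬((↑a : V) = ↑b) := fun hh => h (Subtype.ext hh)
    have hA : ((del T u).Adj a b) = (T.Adj (↑a : V) ↑b) := propext (del_adj T u a b)
    rw [lap_apply, lap_apply]
    simp only [hA]
    simp [h, h']

lemma key (n : ℕ) : ∀ (V : Type) [Fintype V] [DecidableEq V]
    (T : SimpleGraph V) [DecidableRel T.Adj], Fintype.card V = n → T.IsTree →
    ∃ (v : V) (C : Matrix V V ℤ), IsUnit C.det ∧
      Cᵀ * T.lapMatrix ℤ * C = Matrix.diagonal (fun x => if x = v then (0:ℤ) else 1) := by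
  induction n with
  | zero =>
      intro V _ _ T _ hcard hT
      have := Fintype.card_pos_iff.mpr hT.isConnected.nonempty
      omega
  | succ n ih =>
      intro V _ _ T _ hcard hT
      rcases Nat.eq_zero_or_pos n with hn | hn
      · -- one-vertex case
        subst hn
        obtain ⟨v, hv⟩ := Fintype.card_eq_one_iff.mp hcard
        refine ⟨v, 1, by simp, ?_⟩
        have hdeg : T.degree v = 0 := by
          have hemp : T.neighborFinset v = ∅ := by
            rw [Finset.eq_empty_iff_forall_notMem]
            intro y hy
            rw [SimpleGraph.mem_neighborFinset] at hy
            exact T.irrefl (hv y ▸ hy)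
          rw [← SimpleGraph.card_neighborFinset_eq_degree, hemp, Finset.card_empty]
        ext x y
        rw [Matrix.transpose_one, Matrix.one_mul, Matrix.mul_one, lap_apply,
          Matrix.diagonal_apply]
        rw [hv x, hv y]
        simp [hdeg, T.irrefl]
      · -- main case: find a leaf
        have h2 : 2 ≤ Fintype.card V := by omega
        obtain ⟨u, hu⟩ := exists_leaf T hT h2
        obtain ⟨w, hwF⟩ := Finset.card_eq_one.mp hu
        have huw : T.Adj u w := by
          rw [← SimpleGraph.mem_neighborFinset, hwF]
          exact Finset.mem_singleton_self w
        have huniq : ∀ x, T.Adj u x → x = w := fun x hx => by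
          have : x ∈ T.neighborFinset u := (SimpleGraph.mem_neighborFinset _ _ _).mpr hx
          rw [hwF, Finset.mem_singleton] at this
          exact this
        have hcard' : Fintype.card {x : V // x ≠ u} = n := by
          have h1 : Fintype.card {x : V // x = u} = 1 := Fintype.card_subtype_eq u
          have h0 := Fintype.card_subtype_compl (fun x : V => x = u)
          rw [h1] at h0
          rw [h0, hcard]
          omega
        obtain ⟨v', C', hdet', hC'⟩ := ih _ (del T u) hcard'
          (del_isTree T hT huw huniq)
        -- notation
        set L := T.lapMatrix ℤ with hL
        -- basic entries of L at the leaf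
        have hLuu : L u u = 1 := by
          rw [hL, lap_apply]; simp [hu, T.irrefl]
        have hLuy : ∀ y, y ≠ u → y ≠ w → L u y = 0 := by
          intro y hyu hyw
          rw [hL, lap_apply]
          have : ¬ T.Adj u y := fun h => hyw (huniq y h)
          simp [Ne.symm hyu, this]
        have hLyu : ∀ y, y ≠ u → y ≠ w → L y u = 0 := by
          intro y hyu hyw
          rw [hL, lap_apply]
          have : ¬ T.Adj y u := fun h => hyw (huniq y h.symm)
          simp [hyu, this]
        have hLuw : L u w = -1 := by
          rw [hL, lap_apply]; simp [huw.ne, huw]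
        have hLwu : L w u = -1 := by
          rw [hL, lap_apply]; simp [huw.ne', huw.symm]
        -- the conjugated matrix, entrywise
        have h1 : ∀ x y, (L * Matrix.transvection u w (1:ℤ)) x y
            = L x y + (if y = w then L x u else 0) := by
          intro x y
          by_cases hy : y = w
          · subst hy; simp
          · simp [hy]
        have h2' : ∀ N : Matrix V V ℤ, ∀ x y,
            ((Matrix.transvection u w (1:ℤ))ᵀ * N) x y
            = N x y + (if x = w then N u y else 0) := by
          intro N x y
          rw [transpose_transvection]
          by_cases hx : x = w
          · subst hx; simp
          · simp [hx]
        -- the block identity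
        have hne : u ≠ w := huw.ne
        have hnuu : ¬ (u ≠ u) := fun h => h rfl
        have hsu : (Equiv.sumCompl (fun a : V => a ≠ u)).symm u
            = Sum.inr ⟨u, hnuu⟩ :=
          Equiv.sumCompl_symm_apply_of_neg (p := fun a : V => a ≠ u) (a := u) hnuu
        have hsx : ∀ (x : V) (hx : x ≠ u), (Equiv.sumCompl (fun a : V => a ≠ u)).symm x
            = Sum.inl ⟨x, hx⟩ :=
          fun x hx => Equiv.sumCompl_symm_apply_of_pos (p := fun a : V => a ≠ u) (a := x) hx
        have hblock : (Matrix.transvection u w (1:ℤ))ᵀ * L * Matrix.transvection u w 1 =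
            (Matrix.fromBlocks ((del T u).lapMatrix ℤ) 0 0
              (1 : Matrix {x : V // ¬ x ≠ u} {x : V // ¬ x ≠ u} ℤ)).submatrix
              (Equiv.sumCompl (fun a : V => a ≠ u)).symm
              (Equiv.sumCompl (fun a : V => a ≠ u)).symm := by
          ext x y
          rw [Matrix.submatrix_apply, Matrix.mul_assoc, h2', h1, h1]
          by_cases hx : x = u
          · rw [hx, hsu]
            by_cases hy : y = u
            · rw [hy, hsu, Matrix.fromBlocks_apply₂₂]
              simp [hLuu, hne, Matrix.one_apply]
            · rw [hsx y hy, Matrix.fromBlocks_apply₂₁]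
              by_cases hyw : y = w
              · have e1 : L u y = -1 := by rw [hyw]; exact hLuw
                rw [if_pos hyw, if_neg hne]
                simp [e1, hLuu]
              · rw [if_neg hyw, if_neg hne]
                simp [hLuy y hy hyw]
          · rw [hsx x hx]
            by_cases hy : y = u
            · rw [hy, hsu, Matrix.fromBlocks_apply₁₂]
              rw [if_neg hne]
              by_cases hxw : x = w
              · have e1 : L x u = -1 := by rw [hxw]; exact hLwu
                rw [if_pos hxw, if_neg hne]
                simp [e1, hLuu]
              · rw [if_neg hxw]
                simp [hLyu x hx hxw]
            · rw [hsx y hy, Matrix.fromBlocks_apply₁₁, del_lap_apply T huw huniq]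
              by_cases hxw : x = w
              · by_cases hyw : y = w
                · have hxy : x = y := hxw.trans hyw.symm
                  have e1 : L x u = -1 := by rw [hxw]; exact hLwu
                  have e2 : L u y = -1 := by rw [hyw]; exact hLuw
                  have hcond : ((⟨x, hx⟩ : {a : V // a ≠ u}) = ⟨y, hy⟩ ∧ (x : V) = w) :=
                    ⟨Subtype.mk_eq_mk.mpr hxy, hxw⟩
                  rw [if_pos hyw, if_pos hxw, if_pos hyw, if_pos hcond, e1, e2, hLuu]
                  ring
                · have hcond : ¬((⟨x, hx⟩ : {a : V // a ≠ u}) = ⟨y, hy⟩ ∧ (x : V) = w) :=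
                    fun hh => hyw ((Subtype.mk_eq_mk.mp hh.1).symm.trans hh.2)
                  rw [if_neg hyw, if_pos hxw, if_neg hyw, if_neg hcond,
                    hLuy y hy hyw]
                  ring
              · have hcond : ¬((⟨x, hx⟩ : {a : V // a ≠ u}) = ⟨y, hy⟩ ∧ (x : V) = w) :=
                    fun hh => hxw hh.2
                by_cases hyw : y = w
                · rw [if_pos hyw, if_neg hxw, if_neg hcond, hLyu x hx hxw]
                  ring
                · rw [if_neg hyw, if_neg hxw, if_neg hcond]
                  ring
        refine ⟨(v' : V), Matrix.transvection u w 1 *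
          ((Matrix.fromBlocks C' 0 0
            (1 : Matrix {x : V // ¬ x ≠ u} {x : V // ¬ x ≠ u} ℤ)).submatrix
            (Equiv.sumCompl (fun a : V => a ≠ u)).symm
            (Equiv.sumCompl (fun a : V => a ≠ u)).symm), ?_, ?_⟩
        · rw [Matrix.det_mul, Matrix.det_transvection_of_ne u w hne,
            Matrix.det_submatrix_equiv_self, Matrix.det_fromBlocks_zero₂₁,
            Matrix.det_one, one_mul, mul_one]
          exact hdet'
        · rw [Matrix.transpose_mul]
          have heq : ∀ S : Matrix V V ℤ,
              Sᵀ * (Matrix.transvection u w (1:ℤ))ᵀ * L * (Matrix.transvection u w 1 * S)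
              = Sᵀ * (((Matrix.transvection u w (1:ℤ))ᵀ * L * Matrix.transvection u w 1) * S) := by
            intro S
            simp only [Matrix.mul_assoc]
          rw [heq, hblock, Matrix.transpose_submatrix, Matrix.submatrix_mul_equiv,
            Matrix.submatrix_mul_equiv, Matrix.fromBlocks_transpose,
            Matrix.transpose_one, Matrix.transpose_zero,
            Matrix.fromBlocks_multiply, Matrix.fromBlocks_multiply]
          simp only [Matrix.mul_zero, Matrix.zero_mul, add_zero, zero_add,
            Matrix.mul_one, Matrix.one_mul, Matrix.transpose_zero]
          have hC'' : C'ᵀ * ((del T u).lapMatrix ℤ * C')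
              = Matrix.diagonal (fun x => if x = v' then (0:ℤ) else 1) := by
            rw [← Matrix.mul_assoc]; exact hC'
          rw [hC'', ← Matrix.diagonal_one, Matrix.fromBlocks_diagonal,
            Matrix.submatrix_diagonal_equiv]
          refine congrArg Matrix.diagonal (funext fun x => ?_)
          simp only [Function.comp_apply]
          by_cases hxu : x = u
          · rw [hxu, hsu]
            have hvu : ¬ (u = (v' : V)) := fun h => v'.2 h.symm
            simp [hvu]
          · rw [hsx x hxu]
            simp [Subtype.ext_iff]

end TreeLapAux

/-- Any two trees on `n` vertices have combinatorial Laplacians representing equivalent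
quadratic forms over `ℤ`. -/
theorem stmt_11 (n : ℕ) (T₁ T₂ : SimpleGraph (Fin n))
    [DecidableRel T₁.Adj] [DecidableRel T₂.Adj]
    (h₁ : T₁.IsTree) (h₂ : T₂.IsTree) :
    ∃ P : Matrix (Fin n) (Fin n) ℤ, IsUnit P.det ∧
      Pᵀ * T₁.lapMatrix ℤ * P = T₂.lapMatrix ℤ := by
  classical
  obtain ⟨v₁, C₁, hd₁, hC₁⟩ := TreeLapAux.key n (Fin n) T₁ (Fintype.card_fin n) h₁
  obtain ⟨v₂, C₂, hd₂, hC₂⟩ := TreeLapAux.key n (Fin n) T₂ (Fintype.card_fin n) h₂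
  have hQt : (PEquiv.toMatrix (Equiv.swap v₁ v₂).toPEquiv : Matrix (Fin n) (Fin n) ℤ)ᵀ
      = ((Equiv.swap v₁ v₂).symm.toPEquiv.toMatrix) := by
    rw [Equiv.toPEquiv_symm, PEquiv.toMatrix_symm]
  have hperm : (PEquiv.toMatrix (Equiv.swap v₁ v₂).toPEquiv : Matrix (Fin n) (Fin n) ℤ)ᵀ
        * Matrix.diagonal (fun x => if x = v₁ then (0:ℤ) else 1)
        * (Equiv.swap v₁ v₂).toPEquiv.toMatrix
      = Matrix.diagonal (fun x => if x = v₂ then (0:ℤ) else 1) := by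
    rw [hQt, PEquiv.toMatrix_toPEquiv_mul, PEquiv.mul_toMatrix_toPEquiv,
      Matrix.submatrix_submatrix]
    have : (Matrix.diagonal (fun x => if x = v₁ then (0:ℤ) else 1)).submatrix
        (⇑(Equiv.swap v₁ v₂).symm ∘ id) (id ∘ ⇑(Equiv.swap v₁ v₂).symm)
        = (Matrix.diagonal (fun x => if x = v₁ then (0:ℤ) else 1)).submatrix
        (⇑(Equiv.swap v₁ v₂).symm) (⇑(Equiv.swap v₁ v₂).symm) := rfl
    rw [this, Matrix.submatrix_diagonal_equiv]
    refine congrArg Matrix.diagonal (funext fun x => ?_)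
    simp only [Function.comp_apply, Equiv.symm_swap]
    by_cases hx : x = v₂
    · rw [hx]
      simp [Equiv.swap_apply_right]
    · have : Equiv.swap v₁ v₂ x ≠ v₁ := fun h => hx (by
        have := congrArg (Equiv.swap v₁ v₂) h
        rwa [Equiv.swap_apply_self, Equiv.swap_apply_left] at this)
      simp [this, hx]
  refine ⟨C₁ * (Equiv.swap v₁ v₂).toPEquiv.toMatrix * C₂⁻¹, ?_, ?_⟩
  · have hpm : ((Equiv.swap v₁ v₂).permMatrix ℤ)
        = (Equiv.swap v₁ v₂).toPEquiv.toMatrix := rfl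
    rw [Matrix.det_mul, Matrix.det_mul, ← hpm, Matrix.det_permutation]
    exact ((hd₁.mul (Equiv.Perm.sign (Equiv.swap v₁ v₂)).isUnit).mul
      (C₂.isUnit_nonsing_inv_det hd₂))
  · rw [Matrix.transpose_mul, Matrix.transpose_mul]
    have hassoc : ∀ (A B C D : Matrix (Fin n) (Fin n) ℤ),
        C₂⁻¹ᵀ * (A * B) * (T₁.lapMatrix ℤ) * (C * D * C₂⁻¹)
        = C₂⁻¹ᵀ * (A * ((B * (T₁.lapMatrix ℤ)) * C) * D) * C₂⁻¹ := by
      intro A B C D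
      simp only [Matrix.mul_assoc]
    rw [hassoc]
    have h1 : (Equiv.swap v₁ v₂).toPEquiv.toMatrixᵀ
        * ((C₁ᵀ * T₁.lapMatrix ℤ) * C₁) * (Equiv.swap v₁ v₂).toPEquiv.toMatrix
        = Matrix.diagonal (fun x => if x = v₂ then (0:ℤ) else 1) := by
      rw [hC₁]
      exact hperm
    rw [h1, ← hC₂]
    have h2 : C₂⁻¹ᵀ * (C₂ᵀ * T₂.lapMatrix ℤ * C₂) * C₂⁻¹
        = (C₂⁻¹ᵀ * C₂ᵀ) * T₂.lapMatrix ℤ * (C₂ * C₂⁻¹) := by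
      simp only [Matrix.mul_assoc]
    rw [h2, ← Matrix.transpose_mul, Matrix.mul_nonsing_inv _ hd₂,
      Matrix.transpose_one, Matrix.one_mul, Matrix.mul_one]
end

section
/- Let M and M₁ be the combinatorial Laplacians of two graphs G, G₁ on n vertices, and suppose there is a bijection Q of the index set {1,…,n}² (acting linearly on n×n matrices by permuting entries) such that Q((M+uI)⁻¹) = (M₁+uI)⁻¹ for all u in some infinite set of positive reals. Then G and G₁ are cospectral (M and M₁ have the same characteristic polynomial), and for each common eigenvalue λ_k, Q maps the entrywise spectral projection matrix Π_k of M to the spectral projection Π'_k of M₁. -/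
open Matrix

open Polynomial Finset


lemma lemA (T : Finset ℝ) (d : ℝ → ℝ) (S : Set ℝ) (hS : S.Infinite)
    (hden : ∀ u ∈ S, ∀ t ∈ T, u + t ≠ 0)
    (h : ∀ u ∈ S, ∑ t ∈ T, d t / (u + t) = 0) :
    ∀ t ∈ T, d t = 0 := by
  set P : ℝ[X] := ∑ t ∈ T, Polynomial.C (d t) * ∏ s ∈ T.erase t, (Polynomial.X + Polynomial.C s)
    with hP
  have hP0 : P = 0 := by
    apply Polynomial.eq_zero_of_infinite_isRoot
    apply hS.mono
    intro u hu
    have hpe : P.eval u = (∏ s ∈ T, (u + s)) * ∑ t ∈ T, d t / (u + t) := by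
      rw [Finset.mul_sum, hP]
      simp only [Polynomial.eval_finset_sum, Polynomial.eval_mul, Polynomial.eval_C,
        Polynomial.eval_prod, Polynomial.eval_add, Polynomial.eval_X]
      refine Finset.sum_congr rfl fun t ht => ?_
      rw [← Finset.mul_prod_erase T _ ht]
      have h0 := hden u hu t ht
      field_simp
    simp only [Set.mem_setOf_eq, IsRoot.def, hpe, h u hu, mul_zero]
  intro t ht
  have := congrArg (Polynomial.eval (-t)) hP0
  simp only [hP, Polynomial.eval_finset_sum, Polynomial.eval_mul, Polynomial.eval_C,
    Polynomial.eval_prod, Polynomial.eval_add, Polynomial.eval_X, Polynomial.eval_zero] at this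
  rw [Finset.sum_eq_single t] at this
  · rcases mul_eq_zero.mp this with h' | h'
    · exact h'
    · exfalso
      rcases Finset.prod_eq_zero_iff.mp h' with ⟨s, hs, hs0⟩
      have : s ≠ t := (Finset.mem_erase.mp hs).1
      exact this (by linarith)
  · intro b hb hbt
    apply mul_eq_zero_of_right
    apply Finset.prod_eq_zero (Finset.mem_erase.mpr ⟨fun h => hbt h.symm, ht⟩)
    ring
  · intro h'; exact absurd ht h'

lemma lemB_fib {ι' : Type*} [Fintype ι'] (T : Finset ℝ) (u : ℝ)
    (a' c' : ι' → ℝ) (hmem : ∀ i, a' i ∈ T) :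
    ∑ t ∈ T, (∑ i ∈ univ.filter (fun i => a' i = t), c' i) / (u + t)
      = ∑ i, c' i / (u + a' i) := by
  classical
  rw [← Finset.sum_fiberwise_of_maps_to (fun i _ => hmem i)
    (fun i => c' i / (u + a' i))]
  refine Finset.sum_congr rfl fun t ht => ?_
  rw [Finset.sum_div]
  refine Finset.sum_congr rfl fun i hi => ?_
  rw [(Finset.mem_filter.mp hi).2]

 lemma lemB {ι κ : Type*} [Fintype ι] [Fintype κ] (a : ι → ℝ) (b : κ → ℝ)
    (c : ι → ℝ) (e : κ → ℝ) (S : Set ℝ) (hS : S.Infinite)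
    (ha : ∀ i, 0 ≤ a i) (hb : ∀ j, 0 ≤ b j) (hSpos : ∀ u ∈ S, 0 < u)
    (h : ∀ u ∈ S, ∑ i, c i / (u + a i) = ∑ j, e j / (u + b j)) :
    ∀ t : ℝ, ∑ i ∈ univ.filter (fun i => a i = t), c i
      = ∑ j ∈ univ.filter (fun j => b j = t), e j := by
  classical
  set T : Finset ℝ := (univ.image a) ∪ (univ.image b) with hT
  have hTpos : ∀ t ∈ T, 0 ≤ t := by
    intro t ht
    rcases Finset.mem_union.mp ht with h' | h' <;>
      · rcases Finset.mem_image.mp h' with ⟨i, _, rfl⟩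
        first | exact ha i | exact hb i
  set d : ℝ → ℝ := fun t =>
    (∑ i ∈ univ.filter (fun i => a i = t), c i) - (∑ j ∈ univ.filter (fun j => b j = t), e j)
    with hd
  have key : ∀ t ∈ T, d t = 0 := by
    apply lemA T d S hS
    · intro u hu t ht
      have := hSpos u hu
      have := hTpos t ht
      linarith
    · intro u hu
      have hden : ∀ t ∈ T, u + t ≠ 0 := by
        intro t ht; have := hSpos u hu; have := hTpos t ht; linarith
      simp only [hd, sub_div, Finset.sum_sub_distrib]
      have ha' : ∀ i, a i ∈ T := fun i =>
        Finset.mem_union_left _ (Finset.mem_image_of_mem a (mem_univ i))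
      have hb' : ∀ j, b j ∈ T := fun j =>
        Finset.mem_union_right _ (Finset.mem_image_of_mem b (mem_univ j))
      have e1 := lemB_fib T u a c ha'
      have e2 := lemB_fib T u b e hb'
      rw [e1, e2, h u hu, sub_self]
  intro t
  by_cases ht : t ∈ T
  · have := key t ht
    simp only [hd] at this
    linarith
  · have h1 : univ.filter (fun i => a i = t) = ∅ := by
      rw [Finset.filter_eq_empty_iff]
      intro i _ hit
      exact ht (hit ▸ Finset.mem_union_left _ (Finset.mem_image_of_mem a (mem_univ i)))
    have h2 : univ.filter (fun j => b j = t) = ∅ := by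
      rw [Finset.filter_eq_empty_iff]
      intro j _ hjt
      exact ht (hjt ▸ Finset.mem_union_right _ (Finset.mem_image_of_mem b (mem_univ j)))
    rw [h1, h2, Finset.sum_empty, Finset.sum_empty]


lemma myResolvent {N : ℕ} {ι : Type*} [Fintype ι] [DecidableEq ι]
    (lam : ι → ℝ) (P : ι → Matrix (Fin N) (Fin N) ℝ)
    (hsum : ∑ k, P k = 1)
    (hidem : ∀ k, P k * P k = P k)
    (horth : ∀ k l, k ≠ l → P k * P l = 0)
    (u : ℝ) (hu : ∀ k, u + lam k ≠ 0) :
    ((∑ k, lam k • P k) + u • (1 : Matrix (Fin N) (Fin N) ℝ))⁻¹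
      = ∑ k, (u + lam k)⁻¹ • P k := by
  apply inv_eq_right_inv
  have h1 : (∑ k, lam k • P k) + u • (1 : Matrix (Fin N) (Fin N) ℝ)
      = ∑ k, (u + lam k) • P k := by
    rw [← hsum, Finset.smul_sum, ← Finset.sum_add_distrib]
    refine Finset.sum_congr rfl fun k _ => ?_
    rw [add_smul, add_comm]
  rw [h1, Finset.sum_mul_sum]
  have h2 : ∀ k l, ((u + lam k) • P k) * ((u + lam l)⁻¹ • P l)
      = ((u + lam k) * (u + lam l)⁻¹) • (P k * P l) := by
    intro k l
    rw [Matrix.smul_mul, Matrix.mul_smul, smul_smul]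
  calc ∑ k, ∑ l, ((u + lam k) • P k) * ((u + lam l)⁻¹ • P l)
      = ∑ k, ((u + lam k) * (u + lam k)⁻¹) • P k := by
        refine Finset.sum_congr rfl fun k _ => ?_
        rw [Finset.sum_eq_single k]
        · rw [h2, hidem]
        · intro l _ hlk
          rw [h2, horth k l (Ne.symm hlk), smul_zero]
        · intro hk; exact absurd (mem_univ k) hk
    _ = ∑ k, P k := by
        refine Finset.sum_congr rfl fun k _ => ?_
        rw [mul_inv_cancel₀ (hu k), one_smul]
    _ = 1 := hsum

lemma lam_nonneg {N : ℕ} {ι : Type*} [Fintype ι] [DecidableEq ι]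
    (M : Matrix (Fin N) (Fin N) ℝ) (hPSD : M.PosSemidef)
    (lam : ι → ℝ) (P : ι → Matrix (Fin N) (Fin N) ℝ)
    (hM : M = ∑ k, lam k • P k)
    (hidem : ∀ k, P k * P k = P k)
    (horth : ∀ k l, k ≠ l → P k * P l = 0)
    (k : ι) (hk : P k ≠ 0) : 0 ≤ lam k := by
  obtain ⟨i, j, hij⟩ : ∃ i j, P k i j ≠ 0 := by
    by_contra hc
    push_neg at hc
    exact hk (by ext i j; simp [hc i j])
  set w : Fin N → ℝ := fun i' => P k i' j with hw
  have hw0 : w ≠ 0 := fun h => hij (by simpa [hw] using congrFun h i)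
  have hMP : M * P k = lam k • P k := by
    rw [hM, Finset.sum_mul]
    rw [Finset.sum_eq_single k]
    · rw [Matrix.smul_mul, hidem]
    · intro l _ hlk
      rw [Matrix.smul_mul, horth l k hlk, smul_zero]
    · intro hk'; exact absurd (mem_univ k) hk'
  have hMw : M *ᵥ w = lam k • w := by
    have : ∀ i', (M *ᵥ w) i' = (M * P k) i' j := by
      intro i'
      simp [Matrix.mulVec, Matrix.mul_apply, hw, dotProduct]
    funext i'
    rw [this i', hMP]
    simp [hw]
  have hq := hPSD.dotProduct_mulVec_nonneg w
  rw [hMw] at hq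
  have hd : star w ⬝ᵥ (lam k • w) = lam k * (w ⬝ᵥ w) := by
    simp [dotProduct_smul, star_trivial]
  rw [hd] at hq
  have hpos : 0 < w ⬝ᵥ w := by
    have h1 : 0 ≤ w ⬝ᵥ w := Finset.sum_nonneg fun i' _ => mul_self_nonneg _
    have h2 : w ⬝ᵥ w ≠ 0 := by
      intro h
      apply hw0
      ext i'
      have := Finset.sum_eq_zero_iff_of_nonneg (fun i' _ => mul_self_nonneg (w i')) |>.mp h i' (mem_univ i')
      have h0 : w i' = 0 := by nlinarith [this]
      simp [h0]
    exact lt_of_le_of_ne h1 (Ne.symm h2)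
  nlinarith


lemma charmatrix_eq {N : ℕ} (B : Matrix (Fin N) (Fin N) ℝ) :
    charmatrix B = (X : ℝ[X]) • (1 : Matrix (Fin N) (Fin N) ℝ[X]) - B.map C := by
  ext i j
  by_cases h : i = j <;>
    simp [charmatrix_apply, Matrix.one_apply, h, Matrix.diagonal_apply]

lemma charpoly_conj {N : ℕ} (V A W : Matrix (Fin N) (Fin N) ℝ)
    (h1 : V * W = 1) (h2 : W * V = 1) : (V * A * W).charpoly = A.charpoly := by
  unfold Matrix.charpoly
  have key : charmatrix (V * A * W) = (V.map C) * charmatrix A * (W.map C) := by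
    rw [charmatrix_eq, charmatrix_eq]
    rw [Matrix.mul_sub, Matrix.sub_mul]
    congr 1
    · rw [Matrix.mul_smul, Matrix.mul_one, Matrix.smul_mul, ← Matrix.map_mul, h1,
        Matrix.map_one _ (map_zero C) (map_one C)]
    · rw [← Matrix.map_mul, ← Matrix.map_mul]
  rw [key, Matrix.det_mul, Matrix.det_mul, mul_comm, ← mul_assoc, ← Matrix.det_mul,
    ← Matrix.map_mul, h2, Matrix.map_one _ (map_zero C) (map_one C), Matrix.det_one, one_mul]

lemma charpoly_diag {N : ℕ} (d : Fin N → ℝ) :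
    (Matrix.diagonal d).charpoly = ∏ i, (X - C (d i)) := by
  unfold Matrix.charpoly
  have : charmatrix (Matrix.diagonal d) = Matrix.diagonal (fun i => (X : ℝ[X]) - C (d i)) := by
    ext i j
    by_cases h : i = j <;>
      simp [charmatrix_apply, Matrix.diagonal_apply, h]
  rw [this, Matrix.det_diagonal]

lemma diag_decomp {N : ℕ} (M : Matrix (Fin N) (Fin N) ℝ) (hPSD : M.PosSemidef) :
    ∃ (μ : Fin N → ℝ) (R : Fin N → Matrix (Fin N) (Fin N) ℝ),
      (∀ i, 0 ≤ μ i) ∧ M = ∑ i, μ i • R i ∧ (∑ i, R i = 1) ∧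
      (∀ i, R i * R i = R i) ∧ (∀ i j, i ≠ j → R i * R j = 0) ∧
      (∀ i, (R i).trace = 1) ∧ M.charpoly = ∏ i, (X - C (μ i)) := by
  have hH : M.IsHermitian := hPSD.1
  set μ : Fin N → ℝ := hH.eigenvalues with hμ
  set V : Matrix (Fin N) (Fin N) ℝ := (hH.eigenvectorUnitary : Matrix (Fin N) (Fin N) ℝ)
    with hV
  set W : Matrix (Fin N) (Fin N) ℝ := star V with hW
  have hVW : V * W = 1 := (Matrix.mem_unitaryGroup_iff).mp hH.eigenvectorUnitary.2
  have hWV : W * V = 1 := (Matrix.mem_unitaryGroup_iff').mp hH.eigenvectorUnitary.2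
  set dg : Fin N → Matrix (Fin N) (Fin N) ℝ :=
    fun i => Matrix.diagonal (fun j => if j = i then (1 : ℝ) else 0) with hdg
  set R : Fin N → Matrix (Fin N) (Fin N) ℝ := fun i => V * dg i * W with hR
  have hdsum : ∑ i, dg i = Matrix.diagonal μ → True := fun _ => trivial
  have hspec : M = V * Matrix.diagonal μ * W := by
    have := hH.spectral_theorem
    simpa [hμ, hV, hW] using this
  have hdiagsum : ∑ i, μ i • dg i = Matrix.diagonal μ := by
    ext j j'
    by_cases h : j = j' <;>
      simp [Matrix.sum_apply, Matrix.diagonal_apply, hdg, h, Finset.sum_ite_eq']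
  have hdone : ∑ i, dg i = (1 : Matrix (Fin N) (Fin N) ℝ) := by
    ext j j'
    by_cases h : j = j' <;>
      simp [Matrix.sum_apply, Matrix.diagonal_apply, hdg, h, Finset.sum_ite_eq',
        Matrix.one_apply]
  have hdd : ∀ i j, dg i * dg j = if i = j then dg i else 0 := by
    intro i j
    rw [hdg]
    simp only [Matrix.diagonal_mul_diagonal]
    by_cases h : i = j
    · subst h
      rw [if_pos rfl]
      have : (fun j' => (if j' = i then (1:ℝ) else 0) * (if j' = i then 1 else 0))
          = fun j' => if j' = i then (1:ℝ) else 0 := by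
        funext j'
        by_cases h1 : j' = i <;> simp [h1]
      rw [this]
    · rw [if_neg h]
      have : (fun j' => (if j' = i then (1:ℝ) else 0) * (if j' = j then 1 else 0))
          = fun _ => 0 := by
        funext j'
        by_cases h1 : j' = i
        · have h2 : j' ≠ j := fun hc => h (h1.symm.trans hc)
          simp [h1, h2, h]
        · simp [h1]
      rw [this, Matrix.diagonal_zero]
  refine ⟨μ, R, fun i => hPSD.eigenvalues_nonneg i, ?_, ?_, ?_, ?_, ?_, ?_⟩
  · rw [hspec, ← hdiagsum, hR]
    rw [Finset.mul_sum, Finset.sum_mul]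
    refine Finset.sum_congr rfl fun i _ => ?_
    rw [Matrix.mul_smul, Matrix.smul_mul]
  · rw [hR]
    simp only
    rw [← Finset.sum_mul, ← Finset.mul_sum, hdone, Matrix.mul_one, hVW]
  · intro i
    show (V * dg i * W) * (V * dg i * W) = V * dg i * W
    have : (V * dg i * W) * (V * dg i * W) = V * (dg i * (W * V) * dg i) * W := by
      noncomm_ring
    rw [this, hWV, Matrix.mul_one, hdd, if_pos rfl]
  · intro i j hij
    show (V * dg i * W) * (V * dg j * W) = 0
    have : (V * dg i * W) * (V * dg j * W) = V * (dg i * (W * V) * dg j) * W := by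
      noncomm_ring
    rw [this, hWV, Matrix.mul_one, hdd, if_neg hij, Matrix.mul_zero, Matrix.zero_mul]
  · intro i
    show (V * dg i * W).trace = 1
    rw [Matrix.trace_mul_cycle, hWV, Matrix.one_mul, hdg, Matrix.trace_diagonal]
    simp [Finset.sum_ite_eq']
  · rw [hspec, charpoly_conj V _ W hVW hWV, charpoly_diag]


/-- The action of a permutation `Q` of the index set `{1,…,n}²` on `n × n` matrices,
permuting the entries. -/
def entryPerm {n : ℕ} (Q : Equiv.Perm (Fin n × Fin n))
    (B : Matrix (Fin n) (Fin n) ℝ) : Matrix (Fin n) (Fin n) ℝ :=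
  Matrix.of fun x y => B (Q (x, y)).1 (Q (x, y)).2

/-- If a permutation `Q` of matrix-entry positions carries `(M+uI)⁻¹` to `(M₁+uI)⁻¹` for all
`u` in an infinite set of positive reals, where `M, M₁` are the Laplacians of graphs
`G, G₁` with spectral decompositions `M = Σ λₖ•Πₖ`, `M₁ = Σ λ'ₖ•Π'ₖ`, then the graphs are
cospectral, and for each common eigenvalue `Q` carries the spectral projection of `M` to
that of `M₁`. -/
theorem stmt_15 (n m m' : ℕ) (G G₁ : SimpleGraph (Fin n))
    [DecidableRel G.Adj] [DecidableRel G₁.Adj]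
    (lam : Fin (m + 1) → ℝ) (Pr : Fin (m + 1) → Matrix (Fin n) (Fin n) ℝ)
    (lam' : Fin (m' + 1) → ℝ) (Pr' : Fin (m' + 1) → Matrix (Fin n) (Fin n) ℝ)
    (hmono : StrictMono lam) (hmono' : StrictMono lam')
    (hsum : ∑ k, Pr k = 1) (hsum' : ∑ k, Pr' k = 1)
    (hidem : ∀ k, Pr k * Pr k = Pr k) (hidem' : ∀ k, Pr' k * Pr' k = Pr' k)
    (horth : ∀ k l, k ≠ l → Pr k * Pr l = 0)
    (horth' : ∀ k l, k ≠ l → Pr' k * Pr' l = 0)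
    (hne : ∀ k, Pr k ≠ 0) (hne' : ∀ k, Pr' k ≠ 0)
    (hM : G.lapMatrix ℝ = ∑ k, lam k • Pr k)
    (hM' : G₁.lapMatrix ℝ = ∑ k, lam' k • Pr' k)
    (Q : Equiv.Perm (Fin n × Fin n))
    (S : Set ℝ) (hS : S.Infinite) (hSpos : ∀ u ∈ S, 0 < u)
    (hQ : ∀ u ∈ S,
      entryPerm Q (G.lapMatrix ℝ + u • (1 : Matrix (Fin n) (Fin n) ℝ))⁻¹ =
        (G₁.lapMatrix ℝ + u • (1 : Matrix (Fin n) (Fin n) ℝ))⁻¹) :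
    (G.lapMatrix ℝ).charpoly = (G₁.lapMatrix ℝ).charpoly ∧
    ∀ k k', lam k = lam' k' → entryPerm Q (Pr k) = Pr' k' := by
  classical
  set Mg : Matrix (Fin n) (Fin n) ℝ := G.lapMatrix ℝ with hMg
  set Mg' : Matrix (Fin n) (Fin n) ℝ := G₁.lapMatrix ℝ with hMg'
  have hPSD : Mg.PosSemidef := SimpleGraph.posSemidef_lapMatrix ℝ (G := G)
  have hPSD' : Mg'.PosSemidef := SimpleGraph.posSemidef_lapMatrix ℝ (G := G₁)
  have hlnn : ∀ k, 0 ≤ lam k := fun k =>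
    lam_nonneg Mg hPSD lam Pr hM hidem horth k (hne k)
  have hlnn' : ∀ k, 0 ≤ lam' k := fun k =>
    lam_nonneg Mg' hPSD' lam' Pr' hM' hidem' horth' k (hne' k)
  obtain ⟨μ, R, hμnn, hMR, hRsum, hRidem, hRorth, hRtr, hchar⟩ := diag_decomp Mg hPSD
  obtain ⟨μ', R', hμnn', hMR', hRsum', hRidem', hRorth', hRtr', hchar'⟩ :=
    diag_decomp Mg' hPSD'
  -- Resolvent formulas
  have hres : ∀ u ∈ S, (Mg + u • (1 : Matrix (Fin n) (Fin n) ℝ))⁻¹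
      = ∑ k, (u + lam k)⁻¹ • Pr k := by
    intro u hu
    rw [hM]
    exact myResolvent lam Pr hsum hidem horth u
      (fun k => by have := hSpos u hu; have := hlnn k; linarith)
  have hres' : ∀ u ∈ S, (Mg' + u • (1 : Matrix (Fin n) (Fin n) ℝ))⁻¹
      = ∑ k, (u + lam' k)⁻¹ • Pr' k := by
    intro u hu
    rw [hM']
    exact myResolvent lam' Pr' hsum' hidem' horth' u
      (fun k => by have := hSpos u hu; have := hlnn' k; linarith)
  have hresR : ∀ u ∈ S, (Mg + u • (1 : Matrix (Fin n) (Fin n) ℝ))⁻¹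
      = ∑ i, (u + μ i)⁻¹ • R i := by
    intro u hu
    rw [hMR]
    exact myResolvent μ R hRsum hRidem hRorth u
      (fun i => by have := hSpos u hu; have := hμnn i; linarith)
  have hresR' : ∀ u ∈ S, (Mg' + u • (1 : Matrix (Fin n) (Fin n) ℝ))⁻¹
      = ∑ i, (u + μ' i)⁻¹ • R' i := by
    intro u hu
    rw [hMR']
    exact myResolvent μ' R' hRsum' hRidem' hRorth' u
      (fun i => by have := hSpos u hu; have := hμnn' i; linarith)
  -- Key entrywise identities
  have E1 : ∀ (t : ℝ) (x y : Fin n),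
      ∑ k ∈ univ.filter (fun k => lam k = t), Pr k (Q (x, y)).1 (Q (x, y)).2
        = ∑ k ∈ univ.filter (fun k => lam' k = t), Pr' k x y := by
    intro t x y
    refine lemB lam lam' _ _ S hS hlnn hlnn' hSpos (fun u hu => ?_) t
    have h0 := hQ u hu
    have h1 : (Mg + u • (1 : Matrix (Fin n) (Fin n) ℝ))⁻¹ (Q (x, y)).1 (Q (x, y)).2
        = (Mg' + u • (1 : Matrix (Fin n) (Fin n) ℝ))⁻¹ x y := by
      have := congrArg (fun B => B x y) h0
      simpa [entryPerm] using this
    rw [hres u hu, hres' u hu] at h1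
    simpa [Matrix.sum_apply, Matrix.smul_apply, smul_eq_mul, div_eq_mul_inv, mul_comm]
      using h1
  have E2 : ∀ (t : ℝ) (x y : Fin n),
      ∑ k ∈ univ.filter (fun k => lam k = t), Pr k x y
        = ∑ i ∈ univ.filter (fun i => μ i = t), R i x y := by
    intro t x y
    refine lemB lam μ _ _ S hS hlnn hμnn hSpos (fun u hu => ?_) t
    have h1 : (∑ k, (u + lam k)⁻¹ • Pr k) x y = (∑ i, (u + μ i)⁻¹ • R i) x y := by
      rw [← hres u hu, ← hresR u hu]
    simpa [Matrix.sum_apply, Matrix.smul_apply, smul_eq_mul, div_eq_mul_inv, mul_comm]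
      using h1
  have E3 : ∀ (t : ℝ) (x y : Fin n),
      ∑ k ∈ univ.filter (fun k => lam' k = t), Pr' k x y
        = ∑ i ∈ univ.filter (fun i => μ' i = t), R' i x y := by
    intro t x y
    refine lemB lam' μ' _ _ S hS hlnn' hμnn' hSpos (fun u hu => ?_) t
    have h1 : (∑ k, (u + lam' k)⁻¹ • Pr' k) x y = (∑ i, (u + μ' i)⁻¹ • R' i) x y := by
      rw [← hres' u hu, ← hresR' u hu]
    simpa [Matrix.sum_apply, Matrix.smul_apply, smul_eq_mul, div_eq_mul_inv, mul_comm]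
      using h1
  -- singleton filters
  have hfilt : ∀ k : Fin (m + 1), univ.filter (fun l => lam l = lam k) = {k} := by
    intro k
    ext l
    simp only [Finset.mem_filter, Finset.mem_univ, true_and, Finset.mem_singleton]
    exact ⟨fun h => hmono.injective h, fun h => h ▸ rfl⟩
  have hfilt' : ∀ k : Fin (m' + 1), univ.filter (fun l => lam' l = lam' k) = {k} := by
    intro k
    ext l
    simp only [Finset.mem_filter, Finset.mem_univ, true_and, Finset.mem_singleton]
    exact ⟨fun h => hmono'.injective h, fun h => h ▸ rfl⟩
  -- Part 2
  have part2 : ∀ k k', lam k = lam' k' → entryPerm Q (Pr k) = Pr' k' := by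
    intro k k' hkk'
    ext x y
    have h1 := E1 (lam k) x y
    rw [hfilt k, Finset.sum_singleton] at h1
    rw [hkk', hfilt' k', Finset.sum_singleton] at h1
    simpa [entryPerm] using h1
  have hrange : ∀ k, ∃ k', lam k = lam' k' := by
    intro k
    by_contra hc
    push_neg at hc
    have hemp : univ.filter (fun l => lam' l = lam k) = ∅ := by
      rw [Finset.filter_eq_empty_iff]
      exact fun l _ h => hc l h.symm
    apply hne k
    ext a b
    have h1 := E1 (lam k) ((Q.symm (a, b)).1) ((Q.symm (a, b)).2)
    rw [hfilt k, Finset.sum_singleton, hemp, Finset.sum_empty] at h1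
    simpa using h1
  have hrange' : ∀ k', ∃ k, lam' k' = lam k := by
    intro k'
    by_contra hc
    push_neg at hc
    have hemp : univ.filter (fun l => lam l = lam' k') = ∅ := by
      rw [Finset.filter_eq_empty_iff]
      exact fun l _ h => hc l h.symm
    apply hne' k'
    ext a b
    have h1 := E1 (lam' k') a b
    rw [hemp, Finset.sum_empty, hfilt' k', Finset.sum_singleton] at h1
    exact h1.symm
  -- entryPerm preserves identity
  set T : Finset ℝ := (univ.image lam) ∪ (univ.image lam') with hT
  have hmemT : ∀ k, lam k ∈ T := fun k =>
    Finset.mem_union_left _ (Finset.mem_image_of_mem lam (mem_univ k))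
  have hmemT' : ∀ k, lam' k ∈ T := fun k =>
    Finset.mem_union_right _ (Finset.mem_image_of_mem lam' (mem_univ k))
  have hone : ∀ x y : Fin n, (1 : Matrix (Fin n) (Fin n) ℝ) (Q (x, y)).1 (Q (x, y)).2
      = (1 : Matrix (Fin n) (Fin n) ℝ) x y := by
    intro x y
    have hL : ∑ t ∈ T, ∑ k ∈ univ.filter (fun k => lam k = t),
        Pr k (Q (x, y)).1 (Q (x, y)).2 = ∑ k, Pr k (Q (x, y)).1 (Q (x, y)).2 :=
      Finset.sum_fiberwise_of_maps_to (fun k _ => hmemT k) _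
    have hR : ∑ t ∈ T, ∑ k ∈ univ.filter (fun k => lam' k = t),
        Pr' k x y = ∑ k, Pr' k x y :=
      Finset.sum_fiberwise_of_maps_to (fun k _ => hmemT' k) _
    have h1 : ∑ k, Pr k (Q (x, y)).1 (Q (x, y)).2 = ∑ k, Pr' k x y := by
      rw [← hL, ← hR]
      exact Finset.sum_congr rfl fun t _ => E1 t x y
    have h2 : (∑ k, Pr k) (Q (x, y)).1 (Q (x, y)).2 = (∑ k, Pr' k) x y := by
      simpa [Matrix.sum_apply] using h1
    rw [hsum, hsum'] at h2
    exact h2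
  set σ : Fin n → Fin n := fun x => (Q (x, x)).1 with hσ
  have hQdiag : ∀ x, Q (x, x) = (σ x, σ x) := by
    intro x
    have h1 := hone x x
    rw [Matrix.one_apply_eq] at h1
    have h2 : (Q (x, x)).1 = (Q (x, x)).2 := by
      by_contra hc
      rw [Matrix.one_apply_ne hc] at h1
      exact zero_ne_one h1
    exact Prod.ext rfl h2.symm
  have hσbij : Function.Bijective σ := by
    have hinj : Function.Injective σ := by
      intro x y hxy
      have : Q (x, x) = Q (y, y) := by rw [hQdiag, hQdiag, hxy]
      have := Q.injective this
      exact (Prod.ext_iff.mp this).1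
    exact Finite.injective_iff_bijective.mp hinj
  have htr : ∀ k k', lam k = lam' k' → (Pr k).trace = (Pr' k').trace := by
    intro k k' hkk'
    have hP2 := part2 k k' hkk'
    have h1 : ∀ x, Pr' k' x x = Pr k (σ x) (σ x) := by
      intro x
      have := congrArg (fun B => B x x) hP2
      simp only [entryPerm, Matrix.of_apply] at this
      rw [← this, hQdiag x]
    have h2 : ∑ x, Pr' k' x x = ∑ x, Pr k x x := by
      rw [Finset.sum_congr rfl fun x _ => h1 x]
      exact Function.Bijective.sum_comp hσbij (fun y => Pr k y y)
    simp only [Matrix.trace, Matrix.diag]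
    exact h2.symm
  -- counting eigenvalues
  have countR : ∀ t : ℝ, ∑ k ∈ univ.filter (fun k => lam k = t), (Pr k).trace
      = ((univ.filter (fun i => μ i = t)).card : ℝ) := by
    intro t
    have hmat : ∑ k ∈ univ.filter (fun k => lam k = t), Pr k
        = ∑ i ∈ univ.filter (fun i => μ i = t), R i := by
      ext x y
      simpa [Matrix.sum_apply] using E2 t x y
    have := congrArg Matrix.trace hmat
    rw [Matrix.trace_sum, Matrix.trace_sum] at this
    rw [this, Finset.sum_congr rfl fun i _ => hRtr i, Finset.sum_const, nsmul_eq_mul,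
      mul_one]
  have countR' : ∀ t : ℝ, ∑ k ∈ univ.filter (fun k => lam' k = t), (Pr' k).trace
      = ((univ.filter (fun i => μ' i = t)).card : ℝ) := by
    intro t
    have hmat : ∑ k ∈ univ.filter (fun k => lam' k = t), Pr' k
        = ∑ i ∈ univ.filter (fun i => μ' i = t), R' i := by
      ext x y
      simpa [Matrix.sum_apply] using E3 t x y
    have := congrArg Matrix.trace hmat
    rw [Matrix.trace_sum, Matrix.trace_sum] at this
    rw [this, Finset.sum_congr rfl fun i _ => hRtr' i, Finset.sum_const, nsmul_eq_mul,
      mul_one]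
  have hcnt : ∀ t : ℝ, (univ.filter (fun i => μ i = t)).card
      = (univ.filter (fun i => μ' i = t)).card := by
    intro t
    have key : ∑ k ∈ univ.filter (fun k => lam k = t), (Pr k).trace
        = ∑ k ∈ univ.filter (fun k => lam' k = t), (Pr' k).trace := by
      by_cases hex : ∃ k, lam k = t
      · obtain ⟨k, hk⟩ := hex
        obtain ⟨k', hk'⟩ := hrange k
        subst hk
        rw [hfilt k, Finset.sum_singleton, hk', hfilt' k', Finset.sum_singleton]
        exact htr k k' hk'
      · push_neg at hex
        have hemp : univ.filter (fun k => lam k = t) = ∅ :=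
          Finset.filter_eq_empty_iff.mpr fun k _ => hex k
        have hemp' : univ.filter (fun k => lam' k = t) = ∅ := by
          rw [Finset.filter_eq_empty_iff]
          intro k' _ hc
          obtain ⟨k, hk⟩ := hrange' k'
          exact hex k (by rw [← hk, hc])
        rw [hemp, hemp', Finset.sum_empty, Finset.sum_empty]
    have : ((univ.filter (fun i => μ i = t)).card : ℝ)
        = ((univ.filter (fun i => μ' i = t)).card : ℝ) := by
      rw [← countR, ← countR', key]
    exact_mod_cast this
  have hmaps : ∀ i, μ i ∈ T := by
    intro i
    by_contra hc
    have hemp : univ.filter (fun k => lam k = μ i) = ∅ := by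
      rw [Finset.filter_eq_empty_iff]
      intro k _ hk
      exact hc (hk ▸ hmemT k)
    have h1 := countR (μ i)
    rw [hemp, Finset.sum_empty] at h1
    have h2 : i ∈ univ.filter (fun j => μ j = μ i) := by
      simp
    have h3 : 0 < (univ.filter (fun j => μ j = μ i)).card :=
      Finset.card_pos.mpr ⟨i, h2⟩
    have : ((univ.filter (fun j => μ j = μ i)).card : ℝ) = 0 := h1.symm
    rw [Nat.cast_eq_zero] at this
    omega
  have hmaps' : ∀ i, μ' i ∈ T := by
    intro i
    by_contra hc
    have hemp : univ.filter (fun k => lam' k = μ' i) = ∅ := by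
      rw [Finset.filter_eq_empty_iff]
      intro k _ hk
      exact hc (hk ▸ hmemT' k)
    have h1 := countR' (μ' i)
    rw [hemp, Finset.sum_empty] at h1
    have h2 : i ∈ univ.filter (fun j => μ' j = μ' i) := by
      simp
    have h3 : 0 < (univ.filter (fun j => μ' j = μ' i)).card :=
      Finset.card_pos.mpr ⟨i, h2⟩
    have : ((univ.filter (fun j => μ' j = μ' i)).card : ℝ) = 0 := h1.symm
    rw [Nat.cast_eq_zero] at this
    omega
  refine ⟨?_, part2⟩
  rw [hchar, hchar']
  rw [← Finset.prod_fiberwise_of_maps_to (fun i _ => hmaps i) (fun i => X - C (μ i)),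
    ← Finset.prod_fiberwise_of_maps_to (fun i _ => hmaps' i) (fun i => X - C (μ' i))]
  refine Finset.prod_congr rfl fun t _ => ?_
  have hL : ∏ i ∈ univ.filter (fun i => μ i = t), (X - C (μ i))
      = (X - C t) ^ (univ.filter (fun i => μ i = t)).card := by
    rw [Finset.prod_congr rfl fun i hi => by rw [(Finset.mem_filter.mp hi).2],
      Finset.prod_const]
  have hR : ∏ i ∈ univ.filter (fun i => μ' i = t), (X - C (μ' i))
      = (X - C t) ^ (univ.filter (fun i => μ' i = t)).card := by
    rw [Finset.prod_congr rfl fun i hi => by rw [(Finset.mem_filter.mp hi).2],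
      Finset.prod_const]
  rw [hL, hR, hcnt t]
end
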